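/- arXiv:0801.3306 — 6 statements merged into one kernel-verified Lean document; each statement's English description precedes it below -/
import Mathlib

section
/- Let G be a digraph, let σ₀, σ₁, …, σₙ be a sequence of chip configurations on G, each a successor of the one before, and let σ'₀, σ'₁, …, σ'ₘ be another such sequence with σ'₀ = σ₀. (1) If σₙ is stable, then m ≤ n, and no vertex fires more times in the sequence σ'₀,…,σ'ₘ than in σ₀,…,σₙ. (2) If σₙ and σ'ₘ are both stable, then m = n, σₙ = σ'ₘ, and each vertex fires the same number of times in both firing sequences. -/
/-!
Chip-firing on a finite directed multigraph (Holroyd–Levine–Mészáros–Peres–Propp–Wilson,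
Lemma 2.2, "abelian property of chip-firing").

A digraph is given by finite types `V` (vertices) and `E` (edges) together with
maps `tail head : E → V`.  A chip configuration assigns a natural number of chips
to each non-sink vertex.  Firing an active vertex `v` (one with at least `outdeg v`
chips) sends one chip along each outgoing edge of `v`.
-/

/-- The out-degree of a vertex. -/
def outdeg {V E : Type} [Fintype E] [DecidableEq V] (tail : E → V) (v : V) : ℕ :=
  (Finset.univ.filter (fun e => tail e = v)).card

/-- The number of edges from `v` to `w`. -/
def numEdges {V E : Type} [Fintype E] [DecidableEq V] (tail head : E → V) (v w : V) : ℕ :=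
  (Finset.univ.filter (fun e => tail e = v ∧ head e = w)).card

/-- The (sub)type of non-sink vertices. -/
abbrev NonSink {V E : Type} [Fintype E] [DecidableEq V] (tail : E → V) : Type :=
  {v : V // outdeg tail v ≠ 0}

/-- Firing the vertex `v`: `v` loses `outdeg v` chips and sends one chip along each
outgoing edge (chips sent to sinks disappear from the configuration, which records
only non-sink vertices). -/
def fire {V E : Type} [Fintype E] [DecidableEq V] (tail head : E → V)
    (σ : NonSink tail → ℕ) (v : NonSink tail) : NonSink tail → ℕ :=
  fun w =>
    if w = v then σ v + numEdges tail head v.1 v.1 - outdeg tail v.1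
    else σ w + numEdges tail head v.1 w.1

/-- A non-sink vertex is active when it has at least as many chips as outgoing edges. -/
def Active {V E : Type} [Fintype E] [DecidableEq V] (tail : E → V)
    (σ : NonSink tail → ℕ) (v : NonSink tail) : Prop :=
  outdeg tail v.1 ≤ σ v

/-- The result of firing the vertices in the list `l` in order, starting from `σ`. -/
def fireList {V E : Type} [Fintype E] [DecidableEq V] (tail head : E → V)
    (σ : NonSink tail → ℕ) : List (NonSink tail) → (NonSink tail → ℕ)
  | [] => σ
  | v :: l => fireList tail head (fire tail head σ v) l

/-- The firing sequence `l` is legal from `σ`: each fired vertex is active when fired,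
so that each configuration is a successor of the previous one. -/
def Legal {V E : Type} [Fintype E] [DecidableEq V] (tail head : E → V)
    (σ : NonSink tail → ℕ) : List (NonSink tail) → Prop
  | [] => True
  | v :: l => Active tail σ v ∧ Legal tail head (fire tail head σ v) l

/-- A configuration is stable when no non-sink vertex is active. -/
def Stable {V E : Type} [Fintype E] [DecidableEq V] (tail : E → V)
    (σ : NonSink tail → ℕ) : Prop :=
  ∀ v, σ v < outdeg tail v.1

section Helpers

variable {V E : Type} [Fintype E] [DecidableEq V] (tail head : E → V)

lemma active_fire_of_ne {σ : NonSink tail → ℕ} {u v : NonSink tail}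
    (hu : Active tail σ u) (huv : u ≠ v) : Active tail (fire tail head σ v) u := by
  unfold Active fire at *
  simp only [if_neg huv]
  omega

lemma fire_comm {σ : NonSink tail → ℕ} {v w : NonSink tail}
    (hv : Active tail σ v) (hw : Active tail σ w) :
    fire tail head (fire tail head σ v) w = fire tail head (fire tail head σ w) v := by
  by_cases hvw : v = w
  · subst hvw; rfl
  · unfold Active at hv hw
    funext u
    simp only [fire]
    split_ifs <;> subst_vars <;> first | omega | simp_all

/-- Exchange lemma: if `v` is active and `l` is a legal stabilizing sequence, then
`v` occurs in `l` and may be moved to the front. -/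
lemma exchange {σ : NonSink tail → ℕ} {v : NonSink tail} {l : List (NonSink tail)}
    (hv : Active tail σ v) (hl : Legal tail head σ l)
    (hs : Stable tail (fireList tail head σ l)) :
    v ∈ l ∧ Legal tail head σ (v :: l.erase v) ∧
      fireList tail head σ (v :: l.erase v) = fireList tail head σ l := by
  induction l generalizing σ with
  | nil =>
    exact absurd hv (by simpa [Active, Nat.not_le, fireList] using hs v)
  | cons w t ih =>
    obtain ⟨hw, ht⟩ := hl
    by_cases hvw : v = w
    · subst hvw
      simp only [List.erase_cons_head]
      exact And.intro (List.mem_cons_self) (And.intro (And.intro hv ht) trivial)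
    · have hv' : Active tail (fire tail head σ w) v := active_fire_of_ne tail head hv hvw
      obtain ⟨hmem, ⟨_, hleg⟩, heq⟩ := ih hv' ht hs
      have hcomm := fire_comm tail head hv hw
      have herase : (w :: t).erase v = w :: t.erase v := List.erase_cons_tail (by simpa [Subtype.ext_iff] using Ne.symm hvw)
      refine ⟨List.mem_cons_of_mem _ hmem, ?_, ?_⟩
      · rw [herase]
        exact ⟨hv, active_fire_of_ne tail head hw (Ne.symm hvw), by rw [hcomm]; exact hleg⟩
      · rw [herase]
        show fireList tail head (fire tail head (fire tail head σ v) w) (t.erase v)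
            = fireList tail head (fire tail head σ w) t
        rw [hcomm]
        exact heq

end Helpers

/-- **Abelian property of chip-firing.**  If `σ₀, …, σₙ` is a legal firing sequence
ending in a stable configuration, and `σ'₀, …, σ'ₘ` is any legal firing sequence with
the same start, then (1) `m ≤ n` and no vertex fires more times in the second sequence
than in the first; (2) if the second sequence also ends in a stable configuration,
then `m = n`, the final configurations coincide, and each vertex fires the same number
of times in both histories. -/
theorem chip_firing_abelian_property
    {V E : Type} [Fintype V] [DecidableEq V] [Fintype E]
    (tail head : E → V)
    (σ₀ : NonSink tail → ℕ)
    (l l' : List (NonSink tail))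
    (hl : Legal tail head σ₀ l) (hl' : Legal tail head σ₀ l')
    (hstable : Stable tail (fireList tail head σ₀ l)) :
    (l'.length ≤ l.length ∧ ∀ v, l'.count v ≤ l.count v) ∧
      (Stable tail (fireList tail head σ₀ l') →
        l'.length = l.length ∧
        fireList tail head σ₀ l' = fireList tail head σ₀ l ∧
        ∀ v, l'.count v = l.count v) := by
  induction l' generalizing σ₀ l with
  | nil =>
    refine ⟨⟨Nat.zero_le _, fun v => Nat.zero_le _⟩, fun hs' => ?_⟩
    cases l with
    | nil => exact ⟨rfl, rfl, fun v => rfl⟩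
    | cons w t =>
      exact absurd hl.1 (by simpa [Active, Nat.not_le, fireList] using hs' w)
  | cons v t' ih =>
    obtain ⟨hv, ht'⟩ := hl'
    obtain ⟨hmem, ⟨_, hleg⟩, heq⟩ := exchange tail head hv hl hstable
    have hstable' : Stable tail (fireList tail head (fire tail head σ₀ v) (l.erase v)) := by
      have h : fireList tail head (fire tail head σ₀ v) (l.erase v)
          = fireList tail head σ₀ l := heq
      rw [h]; exact hstable
    obtain ⟨⟨hlen, hcount⟩, hpart2⟩ := ih (fire tail head σ₀ v) (l.erase v) hleg ht' hstable'
    have hlenerase : (l.erase v).length = l.length - 1 := List.length_erase_of_mem hmem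
    have hlpos : 0 < l.length := List.length_pos_iff.mpr (List.ne_nil_of_mem hmem)
    constructor
    · constructor
      · simp only [List.length_cons]; omega
      · intro u
        by_cases huv : u = v
        · subst huv
          have h1 : (l.erase u).count u = l.count u - 1 := List.count_erase_self
          have h2 : 1 ≤ l.count u := List.one_le_count_iff.mpr hmem
          have h3 := hcount u
          simp only [List.count_cons_self]
          omega
        · have h1 : (l.erase v).count u = l.count u := List.count_erase_of_ne huv
          have h3 := hcount u
          rw [List.count_cons_of_ne (Ne.symm huv)]
          omega
    · intro hs'
      have hs'' : Stable tail (fireList tail head (fire tail head σ₀ v) t') := hs'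
      obtain ⟨hlen2, heq2, hcount2⟩ := hpart2 hs''
      refine ⟨?_, ?_, ?_⟩
      · simp only [List.length_cons]; omega
      · show fireList tail head (fire tail head σ₀ v) t' = _
        rw [heq2]; exact heq
      · intro u
        by_cases huv : u = v
        · subst huv
          have h1 : (l.erase u).count u = l.count u - 1 := List.count_erase_self
          have h2 : 1 ≤ l.count u := List.one_le_count_iff.mpr hmem
          have h3 := hcount2 u
          simp only [List.count_cons_self]
          omega
        · have h1 : (l.erase v).count u = l.count u := List.count_erase_of_ne huv
          have h3 := hcount2 u
          rw [List.count_cons_of_ne (Ne.symm huv)]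
          omega
end

section
/- If G is a digraph with a global sink, then every chip configuration on G stabilizes: from any chip configuration, some finite sequence of firings of active vertices reaches a stable configuration (and consequently no infinite sequence of firings is possible). -/
section Aux

variable {V E : Type} [Fintype V] [DecidableEq V] [Fintype E] (tail head : E → V)

/-- Total number of chips on non-sink vertices. -/
def total (σ : NonSink tail → ℕ) : ℕ := ∑ w : NonSink tail, σ w

lemma single_le_total (σ : NonSink tail → ℕ) (w : NonSink tail) : σ w ≤ total tail σ :=
  Finset.single_le_sum (fun i _ => Nat.zero_le _) (Finset.mem_univ w)

lemma sum_numEdges (v : V) : ∑ w : V, numEdges tail head v w = outdeg tail v := by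
  rw [outdeg, Finset.card_eq_sum_card_fiberwise (f := head) (t := Finset.univ) (by simp)]
  exact Finset.sum_congr rfl fun w _ => by rw [numEdges, Finset.filter_filter]

lemma subtype_sum_eq (f : V → ℕ) :
    ∑ w : NonSink tail, f w.1
      = ∑ w ∈ Finset.univ.filter (fun v => outdeg tail v ≠ 0), f w :=
  (Finset.sum_subtype _ (by simp) f).symm

lemma fire_apply_ne (σ : NonSink tail → ℕ) (v w : NonSink tail) (h : w ≠ v) :
    fire tail head σ v w = σ w + numEdges tail head v.1 w.1 := by
  rw [fire, if_neg h]

lemma total_fire (σ : NonSink tail → ℕ) (v : NonSink tail) (hv : Active tail σ v) :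
    total tail (fire tail head σ v) + outdeg tail v.1
      = total tail σ + ∑ w : NonSink tail, numEdges tail head v.1 w.1 := by
  have hA : Active tail σ v := hv
  rw [Active] at hA
  unfold total
  rw [← Finset.add_sum_erase _ (fire tail head σ v) (Finset.mem_univ v),
      ← Finset.sum_add_distrib,
      ← Finset.add_sum_erase _ (fun w => σ w + numEdges tail head v.1 w.1) (Finset.mem_univ v)]
  have h1 : ∑ w ∈ Finset.univ.erase v, fire tail head σ v w
      = ∑ w ∈ Finset.univ.erase v, (σ w + numEdges tail head v.1 w.1) :=
    Finset.sum_congr rfl fun w hw => fire_apply_ne tail head σ v w (Finset.ne_of_mem_erase hw)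
  rw [h1, fire, if_pos rfl]
  omega

lemma A_le (v : NonSink tail) :
    ∑ w : NonSink tail, numEdges tail head v.1 w.1 ≤ outdeg tail v.1 := by
  rw [subtype_sum_eq, ← sum_numEdges tail head v.1]
  exact Finset.sum_le_sum_of_subset (Finset.filter_subset _ _)

lemma total_fire_le (σ : NonSink tail → ℕ) (v : NonSink tail) (hv : Active tail σ v) :
    total tail (fire tail head σ v) ≤ total tail σ := by
  have h0 := total_fire tail head σ v hv
  have h1 := A_le tail head v
  omega

lemma total_fire_lt (σ : NonSink tail → ℕ) (v : NonSink tail) (hv : Active tail σ v)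
    (b : V) (hb : outdeg tail b = 0) (e : E) (he1 : tail e = v.1) (he2 : head e = b) :
    total tail (fire tail head σ v) < total tail σ := by
  have h0 := total_fire tail head σ v hv
  have h1 : numEdges tail head v.1 b ≠ 0 :=
    Finset.card_ne_zero_of_mem (Finset.mem_filter.mpr ⟨Finset.mem_univ e, he1, he2⟩)
  have h2 : ∑ w : NonSink tail, numEdges tail head v.1 w.1 + numEdges tail head v.1 b
      ≤ outdeg tail v.1 := by
    rw [subtype_sum_eq, ← sum_numEdges tail head v.1,
        ← Finset.sum_filter_add_sum_filter_not Finset.univ (fun w => outdeg tail w ≠ 0)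
          (numEdges tail head v.1)]
    have hbmem : b ∈ Finset.univ.filter (fun w => ¬ outdeg tail w ≠ 0) :=
      Finset.mem_filter.mpr ⟨Finset.mem_univ b, by simpa using hb⟩
    exact Nat.add_le_add_left
      (Finset.single_le_sum (fun i _ => Nat.zero_le _) hbmem) _
  omega

/-- One firing step (reversed, for accessibility). -/
def Step (σ' σ : NonSink tail → ℕ) : Prop :=
  ∃ v, Active tail σ v ∧ σ' = fire tail head σ v

lemma exists_stab_of_acc (σ : NonSink tail → ℕ) (h : Acc (Step tail head) σ) :
    ∃ l, Legal tail head σ l ∧ Stable tail (fireList tail head σ l) := by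
  induction h with
  | intro σ _ ih =>
    by_cases hst : Stable tail σ
    · exact ⟨[], trivial, hst⟩
    · have hex : ∃ v, Active tail σ v := by
        unfold Stable at hst
        push_neg at hst
        obtain ⟨v, hv⟩ := hst
        exact ⟨v, hv⟩
      obtain ⟨v, hv⟩ := hex
      obtain ⟨l, hl, hstab⟩ := ih (fire tail head σ v) ⟨v, hv, rfl⟩
      exact ⟨v :: l, ⟨hv, hl⟩, hstab⟩

lemma infinite_chain_of_not_acc (σ : NonSink tail → ℕ) (h : ¬ Acc (Step tail head) σ) :
    ∃ τ : ℕ → (NonSink tail → ℕ), τ 0 = σ ∧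
      ∀ n, ∃ v, Active tail (τ n) v ∧ τ (n + 1) = fire tail head (τ n) v := by
  classical
  have key : ∀ c, ¬ Acc (Step tail head) c →
      ∃ c', Step tail head c' c ∧ ¬ Acc (Step tail head) c' := by
    intro c hc
    by_contra h'
    push_neg at h'
    exact hc (Acc.intro c h')
  let f : {c : NonSink tail → ℕ // ¬ Acc (Step tail head) c} →
      {c : NonSink tail → ℕ // ¬ Acc (Step tail head) c} :=
    fun c => ⟨(key c.1 c.2).choose, (key c.1 c.2).choose_spec.2⟩
  let τ' : ℕ → {c : NonSink tail → ℕ // ¬ Acc (Step tail head) c} :=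
    fun n => f^[n] ⟨σ, h⟩
  refine ⟨fun n => (τ' n).1, rfl, fun n => ?_⟩
  have hsucc : τ' (n + 1) = f (τ' n) := Function.iterate_succ_apply' f n _
  obtain ⟨v, hv, heq⟩ := (key (τ' n).1 (τ' n).2).choose_spec.1
  refine ⟨v, hv, ?_⟩
  show (τ' (n + 1)).1 = _
  rw [hsucc]
  exact heq

end Aux
section Main

variable {V E : Type} [Fintype V] [DecidableEq V] [Fintype E]

lemma no_infinite (tail head : E → V) (s : V) (hs : outdeg tail s = 0)
    (hglobal : ∀ v : V,
      Relation.ReflTransGen (fun a b => ∃ e, tail e = a ∧ head e = b) v s)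
    (σ : NonSink tail → ℕ) :
    ¬ ∃ τ : ℕ → (NonSink tail → ℕ), τ 0 = σ ∧
        ∀ n, ∃ v, Active tail (τ n) v ∧ τ (n + 1) = fire tail head (τ n) v := by
  classical
  rintro ⟨τ, hτ0, hτ⟩
  choose vs hact hfire using hτ
  set T : ℕ → ℕ := fun n => total tail (τ n) with hT
  have hmono : ∀ n, T (n + 1) ≤ T n := by
    intro n
    show total tail (τ (n + 1)) ≤ total tail (τ n)
    rw [hfire n]
    exact total_fire_le tail head (τ n) (vs n) (hact n)
  have hanti : ∀ m n, n ≤ m → T m ≤ T n := by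
    intro m n hnm
    induction hnm with
    | refl => exact le_rfl
    | step _ ih => exact le_trans (hmono _) ih
  -- main claim: no vertex on a path to s fires infinitely often
  have main : ∀ u : V,
      Relation.ReflTransGen (fun a b => ∃ e, tail e = a ∧ head e = b) u s →
      ∀ hu : outdeg tail u ≠ 0, ¬ (∀ N, ∃ n, N ≤ n ∧ vs n = ⟨u, hu⟩) := by
    intro u hpath
    induction hpath using Relation.ReflTransGen.head_induction_on with
    | refl => intro hu; exact absurd hs hu
    | @head a c hedge hpath ih =>
      intro hu hinf
      obtain ⟨e, he1, he2⟩ := hedge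
      by_cases hc : outdeg tail c = 0
      · -- c is a sink: every firing of a strictly decreases T
        have drop : ∀ n, vs n = ⟨a, hu⟩ → T (n + 1) < T n := by
          intro n hn
          show total tail (τ (n + 1)) < total tail (τ n)
          rw [hfire n, hn]
          exact total_fire_lt tail head (τ n) ⟨a, hu⟩ (hn ▸ hact n) c hc e he1 he2
        have key : ∀ k, ∃ n, T n + k ≤ T 0 := by
          intro k
          induction k with
          | zero => exact ⟨0, le_rfl⟩
          | succ k ihk =>
            obtain ⟨n, hn⟩ := ihk
            obtain ⟨m, hm, hvm⟩ := hinf n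
            have h1 := drop m hvm
            have h2 := hanti m n hm
            exact ⟨m + 1, by omega⟩
        obtain ⟨n, hn⟩ := key (T 0 + 1)
        omega
      · -- c is a non-sink
        by_cases hcu : c = a
        · subst hcu; exact ih hu hinf
        · have hfin : ∃ N, ∀ n, N ≤ n → vs n ≠ ⟨c, hc⟩ := by
            have := ih hc
            push_neg at this
            exact this
          obtain ⟨N, hN⟩ := hfin
          have hne : (⟨c, hc⟩ : NonSink tail) ≠ ⟨a, hu⟩ :=
            fun h => hcu (congrArg Subtype.val h)
          have hinc : ∀ n, N ≤ n → τ n ⟨c, hc⟩ ≤ τ (n + 1) ⟨c, hc⟩ := by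
            intro n hn
            rw [hfire n, fire_apply_ne tail head (τ n) (vs n) ⟨c, hc⟩
              (fun h => hN n hn h.symm)]
            exact Nat.le_add_right _ _
          have hmono' : ∀ m n, N ≤ n → n ≤ m → τ n ⟨c, hc⟩ ≤ τ m ⟨c, hc⟩ := by
            intro m n hNn hnm
            induction hnm with
            | refl => exact le_rfl
            | step h ih2 => exact le_trans ih2 (hinc _ (le_trans hNn h))
          have hstep1 : ∀ n, N ≤ n → vs n = ⟨a, hu⟩ →
              τ n ⟨c, hc⟩ + 1 ≤ τ (n + 1) ⟨c, hc⟩ := by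
            intro n hn hvn
            rw [hfire n, hvn, fire_apply_ne tail head (τ n) ⟨a, hu⟩ ⟨c, hc⟩ hne]
            have h1 : numEdges tail head a c ≠ 0 :=
              Finset.card_ne_zero_of_mem
                (Finset.mem_filter.mpr ⟨Finset.mem_univ e, he1, he2⟩)
            exact Nat.add_le_add_left (Nat.one_le_iff_ne_zero.mpr h1) _
          have grow : ∀ k, ∃ n, N ≤ n ∧ k ≤ τ n ⟨c, hc⟩ := by
            intro k
            induction k with
            | zero => exact ⟨N, le_rfl, Nat.zero_le _⟩
            | succ k ihk =>
              obtain ⟨n, hn, hk⟩ := ihk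
              obtain ⟨m, hm, hvm⟩ := hinf n
              have h1 := hstep1 m (le_trans hn hm) hvm
              have h2 := hmono' m n hn hm
              exact ⟨m + 1, by omega, by omega⟩
          obtain ⟨n, hn, hk⟩ := grow (T 0 + 1)
          have h1 : τ n ⟨c, hc⟩ ≤ T n := single_le_total tail (τ n) ⟨c, hc⟩
          have h2 := hanti n 0 (Nat.zero_le n)
          omega
  -- pigeonhole: some vertex fires infinitely often
  obtain ⟨u0, hu0⟩ := Finite.exists_infinite_fiber vs
  have hinf0 : (vs ⁻¹' {u0}).Infinite := Set.infinite_coe_iff.mp hu0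
  have hinfF : ∀ N, ∃ n, N ≤ n ∧ vs n = u0 := by
    intro N
    obtain ⟨m, hm, hlt⟩ := hinf0.exists_gt N
    exact ⟨m, le_of_lt hlt, hm⟩
  exact main u0.1 (hglobal u0.1) u0.2 hinfF

end Main

/-- **Stabilization.** If the digraph has a global sink `s` (a sink reachable from
every vertex by a directed path), then from every chip configuration some finite
legal sequence of firings of active vertices reaches a stable configuration; and
consequently there is no infinite sequence of firings of active vertices. -/
theorem every_configuration_stabilizes
    {V E : Type} [Fintype V] [DecidableEq V] [Fintype E]
    (tail head : E → V)
    (s : V) (hs : outdeg tail s = 0)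
    (hglobal : ∀ v : V,
      Relation.ReflTransGen (fun a b => ∃ e, tail e = a ∧ head e = b) v s)
    (σ : NonSink tail → ℕ) :
    (∃ l : List (NonSink tail),
        Legal tail head σ l ∧ Stable tail (fireList tail head σ l)) ∧
      ¬ ∃ τ : ℕ → (NonSink tail → ℕ), τ 0 = σ ∧
          ∀ n, ∃ v, Active tail (τ n) v ∧ τ (n + 1) = fire tail head (τ n) v := by
  have noinf := no_infinite tail head s hs hglobal σ
  refine ⟨?_, noinf⟩
  refine exists_stab_of_acc tail head σ ?_
  by_contra h
  exact noinf (infinite_chain_of_not_acc tail head σ h)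
end

section
/- Let G be a sink-free digraph with a fixed cyclic ordering of the outgoing edges at each vertex. The rotor-router operation is a permutation of the set of unicycles of G. -/
/-!
The rotor-router operation is a permutation of the set of unicycles of a sink-free
digraph (Holroyd et al., Lemma 3.5).
-/

/-- Rotor configurations: an outgoing edge at each vertex. -/
abbrev RotorConfig {V E : Type} (tail : E → V) : Type :=
  {ρ : V → E // ∀ v, tail (ρ v) = v}

/-- The rotor-router operation on single-chip-and-rotor states `(w, ρ)`: the rotor at
the chip's position `w` is advanced to the next edge `next (ρ w)` in the cyclic
ordering of outgoing edges at `w`, and the chip moves to the head of that edge. -/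
def rotorStep {V E : Type} [DecidableEq V] (tail head : E → V) (next : E → E)
    (hnext : ∀ e, tail (next e) = tail e)
    (p : V × RotorConfig tail) : V × RotorConfig tail :=
  (head (next (p.2.1 p.1)),
   ⟨Function.update p.2.1 p.1 (next (p.2.1 p.1)), by
      intro u
      rcases eq_or_ne u p.1 with h | h
      · subst h
        rw [Function.update_self, hnext]
        exact p.2.2 p.1
      · rw [Function.update_of_ne h]
        exact p.2.2 u⟩)

/-- The vertex-successor map of a rotor configuration: follow the rotor for one step. -/
def succMap {V E : Type} (tail : E → V) (head : E → V) (ρ : RotorConfig tail) : V → V :=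
  fun v => head (ρ.1 v)

/-- `(w, ρ)` is a unicycle: the set of rotor edges `{ρ(v)}` contains a unique directed
cycle, and the chip position `w` lies on this cycle.  Equivalently, `w` is a periodic
point of the successor map, and every periodic point lies on the forward orbit of `w`. -/
def Unicycle {V E : Type} (tail head : E → V) (p : V × RotorConfig tail) : Prop :=
  (∃ k, 0 < k ∧ (succMap tail head p.2)^[k] p.1 = p.1) ∧
  ∀ v : V, (∃ k, 0 < k ∧ (succMap tail head p.2)^[k] v = v) →
    ∃ j, (succMap tail head p.2)^[j] p.1 = v

/-- A map is injective on its periodic points. -/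
lemma periodic_cancel {V : Type} (f : V → V) {a b : V} {p q : ℕ}
    (hp : 0 < p) (hq : 0 < q) (ha : f^[p] a = a) (hb : f^[q] b = b)
    (hab : f a = f b) : a = b := by
  obtain ⟨p0, rfl⟩ : ∃ p0, p = p0 + 1 := ⟨p - 1, by omega⟩
  obtain ⟨q0, rfl⟩ : ∃ q0, q = q0 + 1 := ⟨q - 1, by omega⟩
  have hcp : f^[p0 + 1] (f a) = f a := by
    rw [← Function.iterate_succ_apply, Function.iterate_succ_apply', ha]
  have hcq : f^[q0 + 1] (f a) = f a := by
    rw [hab, ← Function.iterate_succ_apply, Function.iterate_succ_apply', hb]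
  have hac : f^[p0] (f a) = a := by
    rw [← Function.iterate_succ_apply, ha]
  have hbc : f^[q0] (f a) = b := by
    rw [hab, ← Function.iterate_succ_apply, hb]
  have keyp : ∀ n, f^[(p0 + 1) * n] (f a) = f a := fun n => by
    rw [Function.iterate_mul]; exact Function.iterate_fixed hcp n
  have keyq : ∀ n, f^[(q0 + 1) * n] (f a) = f a := fun n => by
    rw [Function.iterate_mul]; exact Function.iterate_fixed hcq n
  calc a = f^[p0] (f a) := hac.symm
    _ = f^[p0] (f^[(p0 + 1) * q0] (f a)) := by rw [keyp q0]
    _ = f^[p0 + (p0 + 1) * q0] (f a) := (Function.iterate_add_apply f p0 _ (f a)).symm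
    _ = f^[q0 + (q0 + 1) * p0] (f a) := by
        rw [show p0 + (p0 + 1) * q0 = q0 + (q0 + 1) * p0 from by ring]
    _ = f^[q0] (f^[(q0 + 1) * p0] (f a)) := Function.iterate_add_apply f q0 _ (f a)
    _ = f^[q0] (f a) := by rw [keyq p0]
    _ = b := hbc

/-- In a finite type, every forward orbit reaches a periodic point. -/
lemma exists_periodic_iterate {V : Type} [Finite V] (f : V → V) (v : V) :
    ∃ n m, 0 < m ∧ f^[m] (f^[n] v) = f^[n] v := by
  obtain ⟨i, j, hij, hfe⟩ := Finite.exists_ne_map_eq_of_infinite (fun n : ℕ => f^[n] v)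
  rcases hij.lt_or_gt with h | h
  · refine ⟨i, j - i, by omega, ?_⟩
    rw [← Function.iterate_add_apply, show j - i + i = j from by omega]
    exact hfe.symm
  · refine ⟨j, i - j, by omega, ?_⟩
    rw [← Function.iterate_add_apply, show i - j + j = i from by omega]
    exact hfe

/-- Key lemma: updating the successor map at the chip position of a unicycle keeps the
chip position periodic, and every periodic point of the new map reaches the chip. -/
lemma update_unicycle {V : Type} [Finite V] [DecidableEq V] (f : V → V) (w c : V)
    (hw : ∃ m, 0 < m ∧ f^[m] w = w)
    (huni : ∀ v, (∃ k, 0 < k ∧ f^[k] v = v) → ∃ j, f^[j] w = v) :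
    (∃ m, 0 < m ∧ (Function.update f w c)^[m] w = w) ∧
    ∀ v, (∃ k, 0 < k ∧ (Function.update f w c)^[k] v = v) →
      ∃ i, (Function.update f w c)^[i] v = w := by
  set g := Function.update f w c with hg
  have havoid : ∀ u, (∀ k, g^[k] u ≠ w) → ∀ k, g^[k] u = f^[k] u := by
    intro u hu k
    induction k with
    | zero => rfl
    | succ k ih =>
      rw [Function.iterate_succ_apply', Function.iterate_succ_apply', ih, ← ih, hg,
        Function.update_of_ne (hu k), ih]
  have reach : ∀ v, (∃ k, 0 < k ∧ g^[k] v = v) → ∃ i, g^[i] v = w := by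
    rintro v ⟨k, hk, hkv⟩
    by_contra hno
    push_neg at hno
    have heq := havoid v hno
    obtain ⟨j, hj⟩ := huni v ⟨k, hk, by rw [← heq k]; exact hkv⟩
    obtain ⟨m, hm, hmw⟩ := hw
    have h1 : f^[m * j] w = w := by
      rw [Function.iterate_mul]; exact Function.iterate_fixed hmw j
    have hle : j ≤ m * j := Nat.le_mul_of_pos_left j hm
    have h2 : f^[m * j - j] v = w := by
      rw [← hj, ← Function.iterate_add_apply, show m * j - j + j = m * j from by omega]
      exact h1
    exact hno (m * j - j) (by rw [heq]; exact h2)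
  obtain ⟨n, m, hm, hper⟩ := exists_periodic_iterate g w
  obtain ⟨i, hi⟩ := reach (g^[n] w) ⟨m, hm, hper⟩
  have hwper : g^[m] w = w := by
    conv_lhs => rw [← hi]
    rw [← Function.iterate_add_apply, show m + i = i + m from Nat.add_comm m i,
      Function.iterate_add_apply, hper, hi]
  exact ⟨⟨m, hm, hwper⟩, reach⟩

/-- **Rotor-router permutes unicycles.**  For a sink-free digraph with a fixed cyclic
ordering of the outgoing edges at each vertex, the rotor-router operation is a
permutation of the set of unicycles. -/
theorem rotor_router_permutes_unicycles
    {V E : Type} [Fintype V] [DecidableEq V] [Fintype E] [DecidableEq E]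
    (tail head : E → V) (next : E → E)
    (hnext : ∀ e, tail (next e) = tail e)
    (hcyc : ∀ e e' : E, tail e = tail e' → ∃ k, next^[k] e = e')
    (hsinkfree : ∀ v : V, ∃ e : E, tail e = v) :
    Set.BijOn (rotorStep tail head next hnext)
      {p : V × RotorConfig tail | Unicycle tail head p}
      {p : V × RotorConfig tail | Unicycle tail head p} := by
  -- every edge is `next`-periodic
  have hnextper : ∀ e : E, ∃ k, 0 < k ∧ next^[k] e = e := by
    intro e
    obtain ⟨k, hk⟩ := hcyc (next e) e (hnext e)
    exact ⟨k + 1, Nat.succ_pos k, by rw [Function.iterate_succ_apply]; exact hk⟩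
  -- successor map of the stepped state
  have hsm : ∀ p : V × RotorConfig tail,
      succMap tail head (rotorStep tail head next hnext p).2
        = Function.update (succMap tail head p.2) p.1 (head (next (p.2.1 p.1))) := by
    intro p
    funext v
    rcases eq_or_ne v p.1 with h | h
    · subst h
      simp [succMap, rotorStep, Function.update_self]
    · simp [succMap, rotorStep, Function.update_of_ne h]
  have hmaps : Set.MapsTo (rotorStep tail head next hnext)
      {p : V × RotorConfig tail | Unicycle tail head p}
      {p : V × RotorConfig tail | Unicycle tail head p} := by
    intro p hp
    simp only [Set.mem_setOf_eq] at hp ⊢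
    obtain ⟨hw, huni⟩ := hp
    obtain ⟨⟨m, hm, hwper⟩, reach⟩ :=
      update_unicycle (succMap tail head p.2) p.1 (head (next (p.2.1 p.1))) hw huni
    set g := Function.update (succMap tail head p.2) p.1 (head (next (p.2.1 p.1)))
      with hgdef
    have hg : succMap tail head (rotorStep tail head next hnext p).2 = g := hsm p
    have hq1 : (rotorStep tail head next hnext p).1 = g p.1 := by
      rw [hgdef]
      exact (Function.update_self p.1 (head (next (p.2.1 p.1)))
        (succMap tail head p.2)).symm
    constructor
    · refine ⟨m, hm, ?_⟩
      rw [hg, hq1, ← Function.iterate_succ_apply, Function.iterate_succ_apply', hwper]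
    · rintro v ⟨k, hk, hkv⟩
      rw [hg] at hkv
      obtain ⟨i, hi⟩ := reach v ⟨k, hk, hkv⟩
      have hle : i ≤ k * i := Nat.le_mul_of_pos_left i hk
      have h1 : g^[k * i - i] p.1 = v := by
        rw [← hi, ← Function.iterate_add_apply,
          show k * i - i + i = k * i from by omega, Function.iterate_mul]
        exact Function.iterate_fixed hkv i
      refine ⟨k * i - i + (m - 1), ?_⟩
      rw [hg, hq1, ← Function.iterate_succ_apply,
        show Nat.succ (k * i - i + (m - 1)) = k * i - i + m from by omega,
        Function.iterate_add_apply, hwper]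
      exact h1
  have hinj : Set.InjOn (rotorStep tail head next hnext)
      {p : V × RotorConfig tail | Unicycle tail head p} := by
    intro p1 h1 p2 h2 heq
    simp only [Set.mem_setOf_eq] at h1 h2
    obtain ⟨hw1, huni1⟩ := h1
    obtain ⟨hw2, huni2⟩ := h2
    obtain ⟨⟨m1, hm1, hp1per⟩, -⟩ :=
      update_unicycle (succMap tail head p1.2) p1.1 (head (next (p1.2.1 p1.1))) hw1 huni1
    obtain ⟨⟨m2, hm2, hp2per⟩, -⟩ :=
      update_unicycle (succMap tail head p2.2) p2.1 (head (next (p2.2.1 p2.1))) hw2 huni2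
    set g := Function.update (succMap tail head p1.2) p1.1 (head (next (p1.2.1 p1.1)))
      with hgdef
    have hg1 : succMap tail head (rotorStep tail head next hnext p1).2 = g := hsm p1
    have hgg : g = Function.update (succMap tail head p2.2) p2.1
        (head (next (p2.2.1 p2.1))) := by
      rw [← hg1, heq, hsm p2]
    rw [← hgg] at hp2per
    have hgw1 : g p1.1 = head (next (p1.2.1 p1.1)) := by
      rw [hgdef]; exact Function.update_self _ _ _
    have hgw2 : g p2.1 = head (next (p2.2.1 p2.1)) := by
      rw [hgg]; exact Function.update_self _ _ _
    have hfst : head (next (p1.2.1 p1.1)) = head (next (p2.2.1 p2.1)) :=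
      congrArg Prod.fst heq
    have hww : p1.1 = p2.1 :=
      periodic_cancel g hm1 hm2 hp1per hp2per (by rw [hgw1, hgw2]; exact hfst)
    have hupd : Function.update p1.2.1 p1.1 (next (p1.2.1 p1.1))
        = Function.update p2.2.1 p2.1 (next (p2.2.1 p2.1)) :=
      congrArg (fun q : V × RotorConfig tail => q.2.1) heq
    rw [← hww] at hupd
    have hts : p1.2.1 = p2.2.1 := by
      funext v
      rcases eq_or_ne v p1.1 with rfl | hv
      · have h := congrFun hupd p1.1
        rw [Function.update_self, Function.update_self] at h
        obtain ⟨a, ha0, ha⟩ := hnextper (p1.2.1 p1.1)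
        obtain ⟨b, hb0, hb⟩ := hnextper (p2.2.1 p1.1)
        exact periodic_cancel next ha0 hb0 ha hb h
      · have h := congrFun hupd v
        rw [Function.update_of_ne hv, Function.update_of_ne hv] at h
        exact h
    exact Prod.ext hww (Subtype.ext hts)
  exact ((Set.toFinite _).injOn_iff_bijOn_of_mapsTo hmaps).mp hinj
end

section
/- Let G be a strongly connected digraph with a fixed cyclic ordering of the outgoing edges at each vertex. A single-chip-and-rotor state (w, ρ) on G is recurrent under the rotor-router operation if and only if it is a unicycle. -/
/-- A state is recurrent when iterating the rotor-router operation eventually leads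
back to it. -/
def RecurrentState {V E : Type} [DecidableEq V] (tail head : E → V) (next : E → E)
    (hnext : ∀ e, tail (next e) = tail e) (p : V × RotorConfig tail) : Prop :=
  ∃ n, 0 < n ∧ (rotorStep tail head next hnext)^[n] p = p

/-! ### Auxiliary lemmas -/

private lemma iterate_comm_apply' {α : Type} (f : α → α) (i k : ℕ) (x : α) :
    f^[i] (f^[k] x) = f^[k] (f^[i] x) := by
  rw [← Function.iterate_add_apply, ← Function.iterate_add_apply, Nat.add_comm]

private lemma exists_eventual_period' {α : Type} [Finite α] (f : α → α) (x : α) :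
    ∃ m k, 0 < k ∧ f^[m + k] x = f^[m] x := by
  obtain ⟨a, b, hab, h⟩ := Finite.exists_ne_map_eq_of_infinite (fun n : ℕ => f^[n] x)
  have h' : f^[a] x = f^[b] x := h
  rcases Nat.lt_or_ge a b with hlt | hge
  · refine ⟨a, b - a, by omega, ?_⟩
    have hb : a + (b - a) = b := by omega
    rw [hb]
    exact h'.symm
  · have hba : b < a := by omega
    refine ⟨b, a - b, by omega, ?_⟩
    have ha : b + (a - b) = a := by omega
    rw [ha]
    exact h'

/-- If `v` is periodic and reaches `w`, then `w` reaches `v`. -/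
private lemma reach_back' {α : Type} (σ : α → α) (v w : α) (k i : ℕ)
    (hk : 0 < k) (hv : σ^[k] v = v) (hi : σ^[i] v = w) :
    ∃ j, σ^[j] w = v := by
  have hN : σ^[k * (i + 1)] v = v := by
    rw [Function.iterate_mul]
    exact Function.iterate_fixed hv (i + 1)
  have hge : i ≤ k * (i + 1) := by
    have h1 : 1 * (i + 1) ≤ k * (i + 1) := Nat.mul_le_mul_right _ hk
    omega
  refine ⟨k * (i + 1) - i, ?_⟩
  have hadd := Function.iterate_add_apply σ (k * (i + 1) - i) i v
  rw [Nat.sub_add_cancel hge] at hadd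
  rw [hi] at hadd
  rw [← hadd, hN]

/-- Core functional-graph lemma: if `σ'` agrees with `σ` away from `w`, and `σ` has a
unique cycle passing through `w`, then `w` is `σ'`-periodic and every `σ'`-periodic
point reaches `w` under `σ'`. -/
private lemma cycle_core' {α : Type} [Finite α] (σ σ' : α → α) (w : α)
    (hdiff : ∀ v, v ≠ w → σ' v = σ v)
    (hper : ∃ k, 0 < k ∧ σ^[k] w = w)
    (huni : ∀ v, (∃ k, 0 < k ∧ σ^[k] v = v) → ∃ j, σ^[j] w = v) :
    (∃ k, 0 < k ∧ σ'^[k] w = w) ∧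
    ∀ v, (∃ k, 0 < k ∧ σ'^[k] v = v) → ∃ i, σ'^[i] v = w := by
  obtain ⟨t, ht, hw⟩ := hper
  have S : ∀ v, (∃ k, 0 < k ∧ σ'^[k] v = v) → ∃ i, σ'^[i] v = w := by
    rintro v ⟨k, hk, hv⟩
    by_contra hcon
    push_neg at hcon
    have heq : ∀ i, σ^[i] v = σ'^[i] v := by
      intro i
      induction i with
      | zero => rfl
      | succ i ih =>
          rw [Function.iterate_succ_apply', Function.iterate_succ_apply', ih,
            hdiff _ (hcon i)]
    have hvσ : σ^[k] v = v := by rw [heq]; exact hv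
    obtain ⟨j, hj⟩ := huni v ⟨k, hk, hvσ⟩
    obtain ⟨i, hi⟩ := reach_back' σ w v t j ht hw hj
    exact hcon i (by rw [← heq]; exact hi)
  refine ⟨?_, S⟩
  obtain ⟨m, k, hk, hmk⟩ := exists_eventual_period' σ' w
  have hx : σ'^[k] (σ'^[m] w) = σ'^[m] w := by
    rw [← Function.iterate_add_apply, Nat.add_comm]
    exact hmk
  obtain ⟨i, hi⟩ := S (σ'^[m] w) ⟨k, hk, hx⟩
  refine ⟨k, hk, ?_⟩
  calc σ'^[k] w = σ'^[k] (σ'^[i] (σ'^[m] w)) := by rw [hi]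
    _ = σ'^[i] (σ'^[k] (σ'^[m] w)) := iterate_comm_apply' σ' k i _
    _ = σ'^[i] (σ'^[m] w) := by rw [hx]
    _ = w := hi

private lemma tail_iterate' {V E : Type} (tail : E → V) (next : E → E)
    (hnext : ∀ e, tail (next e) = tail e) :
    ∀ (k : ℕ) (e : E), tail (next^[k] e) = tail e := by
  intro k
  induction k with
  | zero => intro e; rfl
  | succ k ih => intro e; rw [Function.iterate_succ_apply', hnext, ih]

private lemma next_periodic' {V E : Type} [Finite E] (tail : E → V) (next : E → E)
    (hnext : ∀ e, tail (next e) = tail e)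
    (hcyc : ∀ e e' : E, tail e = tail e' → ∃ k, next^[k] e = e')
    (e : E) : ∃ t, 0 < t ∧ next^[t] e = e := by
  obtain ⟨m, k, hk, hmk⟩ := exists_eventual_period' next e
  obtain ⟨s, hs⟩ := hcyc (next^[m] e) e (tail_iterate' tail next hnext m e)
  refine ⟨s + (m + k), by omega, ?_⟩
  rw [Function.iterate_add_apply, hmk]
  exact hs

private lemma next_inj' {V E : Type} [Finite E] (tail : E → V) (next : E → E)
    (hnext : ∀ e, tail (next e) = tail e)
    (hcyc : ∀ e e' : E, tail e = tail e' → ∃ k, next^[k] e = e') :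
    Function.Injective next := by
  intro a b hab
  obtain ⟨ta, hta, ha⟩ := next_periodic' tail next hnext hcyc a
  obtain ⟨tb, htb, hb⟩ := next_periodic' tail next hnext hcyc b
  have hta' : next^[ta * tb] a = a := by
    rw [Function.iterate_mul]
    exact Function.iterate_fixed ha tb
  have htb' : next^[ta * tb] b = b := by
    rw [mul_comm, Function.iterate_mul]
    exact Function.iterate_fixed hb ta
  have h1 : 0 < ta * tb := Nat.mul_pos hta htb
  have e1 : (ta * tb - 1).succ = ta * tb := by omega
  calc a = next^[ta * tb] a := hta'.symm
    _ = next^[ta * tb - 1] (next a) := by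
        rw [← Function.iterate_succ_apply, e1]
    _ = next^[ta * tb - 1] (next b) := by rw [hab]
    _ = next^[ta * tb] b := by rw [← Function.iterate_succ_apply, e1]
    _ = b := htb'

/-- The rotor-router step sends unicycles to unicycles. -/
private lemma step_unicycle' {V E : Type} [Finite V] [DecidableEq V]
    (tail head : E → V) (next : E → E)
    (hnext : ∀ e, tail (next e) = tail e)
    (p : V × RotorConfig tail) (h : Unicycle tail head p) :
    Unicycle tail head (rotorStep tail head next hnext p) := by
  set q := rotorStep tail head next hnext p with hq
  set σ := succMap tail head p.2 with hσdef
  set σ' := succMap tail head q.2 with hσ'def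
  have hdiff : ∀ v, v ≠ p.1 → σ' v = σ v := by
    intro v hv
    show head (q.2.1 v) = head (p.2.1 v)
    have : q.2.1 v = p.2.1 v := Function.update_of_ne hv _ _
    rw [this]
  have hww : σ' p.1 = q.1 := by
    show head (q.2.1 p.1) = q.1
    have : q.2.1 p.1 = next (p.2.1 p.1) := Function.update_self _ _ _
    rw [this]
    rfl
  obtain ⟨⟨t, ht, hw⟩, S⟩ := cycle_core' σ σ' p.1 hdiff h.1 h.2
  constructor
  · refine ⟨t, ht, ?_⟩
    show σ'^[t] q.1 = q.1
    rw [← hww, ← Function.iterate_succ_apply, Function.iterate_succ_apply', hw]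
  · rintro v ⟨k, hk, hv⟩
    obtain ⟨i, hi⟩ := S v ⟨k, hk, hv⟩
    obtain ⟨j, hj⟩ := reach_back' σ' v p.1 k i hk hv hi
    rcases j with _ | j'
    · refine ⟨t - 1, ?_⟩
      show σ'^[t - 1] q.1 = v
      rw [← hww, ← Function.iterate_succ_apply]
      have e1 : (t - 1).succ = t := by omega
      rw [e1, hw]
      simpa using hj
    · refine ⟨j', ?_⟩
      show σ'^[j'] q.1 = v
      rw [← hww, ← Function.iterate_succ_apply]
      exact hj

/-- The rotor-router step is injective on unicycles. -/
private lemma step_inj' {V E : Type} [Finite V] [Finite E] [DecidableEq V]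
    (tail head : E → V) (next : E → E)
    (hnext : ∀ e, tail (next e) = tail e)
    (hcyc : ∀ e e' : E, tail e = tail e' → ∃ k, next^[k] e = e')
    (p q : V × RotorConfig tail)
    (hp : Unicycle tail head p) (hq : Unicycle tail head q)
    (h : rotorStep tail head next hnext p = rotorStep tail head next hnext q) :
    p = q := by
  have h1 : (rotorStep tail head next hnext p).1 = (rotorStep tail head next hnext q).1 :=
    congrArg Prod.fst h
  have h2 : (rotorStep tail head next hnext p).2.1 = (rotorStep tail head next hnext q).2.1 :=
    congrArg (fun s => s.2.1) h
  set σ' := succMap tail head (rotorStep tail head next hnext p).2 with hσ'def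
  have hdiffp : ∀ v, v ≠ p.1 → σ' v = succMap tail head p.2 v := by
    intro v hv
    show head ((rotorStep tail head next hnext p).2.1 v) = head (p.2.1 v)
    have : (rotorStep tail head next hnext p).2.1 v = p.2.1 v := Function.update_of_ne hv _ _
    rw [this]
  have hdiffq : ∀ v, v ≠ q.1 → σ' v = succMap tail head q.2 v := by
    intro v hv
    show head ((rotorStep tail head next hnext p).2.1 v) = head (q.2.1 v)
    rw [h2]
    have : (rotorStep tail head next hnext q).2.1 v = q.2.1 v := Function.update_of_ne hv _ _
    rw [this]
  obtain ⟨⟨t1, ht1, hw1⟩, S1⟩ := cycle_core' _ σ' p.1 hdiffp hp.1 hp.2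
  obtain ⟨⟨t2, ht2, hw2⟩, S2⟩ := cycle_core' _ σ' q.1 hdiffq hq.1 hq.2
  have hσw1 : σ' p.1 = (rotorStep tail head next hnext p).1 := by
    show head ((rotorStep tail head next hnext p).2.1 p.1) = _
    have : (rotorStep tail head next hnext p).2.1 p.1 = next (p.2.1 p.1) :=
      Function.update_self _ _ _
    rw [this]
    rfl
  have hσw2 : σ' q.1 = (rotorStep tail head next hnext q).1 := by
    show head ((rotorStep tail head next hnext p).2.1 q.1) = _
    rw [h2]
    have : (rotorStep tail head next hnext q).2.1 q.1 = next (q.2.1 q.1) :=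
      Function.update_self _ _ _
    rw [this]
    rfl
  have hww : p.1 = q.1 := by
    obtain ⟨i, hi⟩ := S1 q.1 ⟨t2, ht2, hw2⟩
    have hper1 : σ'^[t2] p.1 = p.1 := by
      rw [← hi, iterate_comm_apply' σ' t2 i, hw2]
    have hsame : σ' p.1 = σ' q.1 := by rw [hσw1, hσw2, h1]
    have e1 : (t2 - 1).succ = t2 := by omega
    calc p.1 = σ'^[t2] p.1 := hper1.symm
      _ = σ'^[t2 - 1] (σ' p.1) := by rw [← Function.iterate_succ_apply, e1]
      _ = σ'^[t2 - 1] (σ' q.1) := by rw [hsame]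
      _ = σ'^[t2] q.1 := by rw [← Function.iterate_succ_apply, e1]
      _ = q.1 := hw2
  have hupd : Function.update p.2.1 p.1 (next (p.2.1 p.1))
      = Function.update q.2.1 q.1 (next (q.2.1 q.1)) := h2
  have hρ : p.2.1 = q.2.1 := by
    funext v
    rcases eq_or_ne v p.1 with hv | hv
    · rw [hv]
      have hcf := congrFun hupd p.1
      rw [Function.update_self] at hcf
      rw [← hww] at hcf
      rw [Function.update_self] at hcf
      exact next_inj' tail next hnext hcyc hcf
    · have hcf := congrFun hupd v
      rw [Function.update_of_ne hv] at hcf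
      rw [← hww] at hcf
      rw [Function.update_of_ne hv] at hcf
      exact hcf
  exact Prod.ext hww (Subtype.ext hρ)

/-- **Recurrent states are exactly the unicycles.**  On a strongly connected digraph
with a fixed cyclic ordering of the outgoing edges at each vertex, a
single-chip-and-rotor state is recurrent under the rotor-router operation if and only
if it is a unicycle. -/
theorem recurrent_iff_unicycle
    {V E : Type} [Fintype V] [DecidableEq V] [Fintype E] [DecidableEq E]
    (tail head : E → V) (next : E → E)
    (hnext : ∀ e, tail (next e) = tail e)
    (hcyc : ∀ e e' : E, tail e = tail e' → ∃ k, next^[k] e = e')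
    (hsc : ∀ u v : V,
      Relation.ReflTransGen (fun a b => ∃ e, tail e = a ∧ head e = b) u v)
    (p : V × RotorConfig tail) :
    RecurrentState tail head next hnext p ↔ Unicycle tail head p := by
  classical
  set f := rotorStep tail head next hnext with hfdef
  constructor
  · rintro ⟨n, hn, hfix⟩
    set w : ℕ → V := fun i => (f^[i] p).1 with hwdef
    set r : ℕ → V → E := fun i => (f^[i] p).2.1 with hrdef
    have hsucc : ∀ i, f^[i + 1] p = f (f^[i] p) := fun i => Function.iterate_succ_apply' f i p
    have hstep_w : ∀ i, w (i + 1) = head (next (r i (w i))) := by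
      intro i
      simp only [hwdef, hrdef, hsucc i]
      rfl
    have hstep_r : ∀ i, r (i + 1) = Function.update (r i) (w i) (next (r i (w i))) := by
      intro i
      simp only [hwdef, hrdef, hsucc i]
      rfl
    have hperiod : ∀ i, f^[i + n] p = f^[i] p := by
      intro i
      rw [Function.iterate_add_apply, hfix]
    -- the rotor at `u` is unchanged while the chip is elsewhere
    have hconst : ∀ (u : V) (a d : ℕ), (∀ j, a ≤ j → j < a + d → w j ≠ u) →
        r (a + d) u = r a u := by
      intro u a d
      induction d with
      | zero => intro _; rfl
      | succ d ih =>
          intro hnov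
          have hprev : r (a + d) u = r a u := ih (fun j hj hj' => hnov j hj (by omega))
          show r ((a + d) + 1) u = r a u
          rw [hstep_r (a + d), Function.update_of_ne
            (Ne.symm (hnov (a + d) (by omega) (by omega))), hprev]
    -- from any visit there is a later visit with the rotor advanced once
    have hvisit_mem : ∀ (u : V) (m : ℕ), w m = u →
        ∃ m', m < m' ∧ w m' = u ∧ r m' u = next (r m u) := by
      intro u m hm
      have hex : ∃ j, m < j ∧ w j = u := by
        refine ⟨m + n, by omega, ?_⟩
        show (f^[m + n] p).1 = u
        rw [hperiod m]
        exact hm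
      set m' := Nat.find hex with hm'def
      obtain ⟨hlt, hwm'⟩ := Nat.find_spec hex
      refine ⟨m', hlt, hwm', ?_⟩
      have hnov : ∀ j, m + 1 ≤ j → j < (m + 1) + (m' - (m + 1)) → w j ≠ u := by
        intro j hj hj' hwj
        have hjm : j < m' := by omega
        exact absurd ⟨by omega, hwj⟩ (Nat.find_min hex hjm)
      have h1 : r ((m + 1) + (m' - (m + 1))) u = r (m + 1) u := hconst u (m + 1) _ hnov
      have h2 : (m + 1) + (m' - (m + 1)) = m' := by omega
      rw [h2] at h1
      rw [h1, hstep_r m, hm, Function.update_self]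
    have hvisit_iter : ∀ (u : V) (m : ℕ), w m = u →
        ∀ k, ∃ m', w m' = u ∧ r m' u = next^[k] (r m u) := by
      intro u m hm k
      induction k with
      | zero => exact ⟨m, hm, rfl⟩
      | succ k ih =>
          obtain ⟨m', hm', hr'⟩ := ih
          obtain ⟨m'', _, hm'', hr''⟩ := hvisit_mem u m' hm'
          refine ⟨m'', hm'', ?_⟩
          rw [hr'', hr', Function.iterate_succ_apply']
    -- the visited set is closed under out-edges
    have hclosed : ∀ (u : V) (e : E), (∃ m, w m = u) → tail e = u → ∃ m, w m = head e := by
      rintro u e ⟨m₀, hm₀⟩ hte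
      have htail : tail (r m₀ u) = u := (f^[m₀] p).2.2 u
      obtain ⟨k₀, hk₀⟩ := hcyc (r m₀ u) e (by rw [htail, hte])
      obtain ⟨t, ht, hte'⟩ := next_periodic' tail next hnext hcyc e
      have hk : next^[t + k₀] (r m₀ u) = e := by
        rw [Function.iterate_add_apply, hk₀, hte']
      obtain ⟨k', hk'⟩ : ∃ k', t + k₀ = k' + 1 := ⟨t + k₀ - 1, by omega⟩
      rw [hk'] at hk
      obtain ⟨m, hm, hr⟩ := hvisit_iter u m₀ hm₀ k'
      refine ⟨m + 1, ?_⟩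
      rw [hstep_w m, hm, hr, ← Function.iterate_succ_apply' next k' (r m₀ u), hk]
    -- every vertex is visited
    have hall : ∀ v, ∃ m, w m = v := by
      intro v
      have hrt := hsc (w 0) v
      induction hrt with
      | refl => exact ⟨0, rfl⟩
      | tail _ hbc ih =>
          obtain ⟨e, hte, hhe⟩ := hbc
          obtain ⟨m, hm⟩ := hclosed _ e ih hte
          exact ⟨m, by rw [hm, hhe]⟩
    have hqper : ∀ (q : ℕ) (i : ℕ), f^[i + q * n] p = f^[i] p := by
      intro q
      induction q with
      | zero => intro i; simp
      | succ q ih =>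
          intro i
          have he : i + (q + 1) * n = (i + q * n) + n := by ring
          rw [he, hperiod (i + q * n), ih i]
    have hmod : ∀ m, w m = w (m % n) := by
      intro m
      have hq := hqper (m / n) (m % n)
      rw [Nat.mod_add_div' m n] at hq
      show (f^[m] p).1 = (f^[m % n] p).1
      rw [hq]
    have hvis : ∀ v, ∃ i, i < n ∧ w i = v := by
      intro v
      obtain ⟨m, hm⟩ := hall v
      exact ⟨m % n, Nat.mod_lt m hn, by rw [← hmod m]; exact hm⟩
    -- the last visit time before `n`
    have hτex : ∀ v : V, ∃ i, i < n ∧ w i = v ∧ ∀ j, j < n → w j = v → j ≤ i := by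
      intro v
      obtain ⟨i, hi, hwi⟩ := hvis v
      set F := (Finset.range n).filter (fun j => w j = v) with hF
      have hne : F.Nonempty := ⟨i, by simp [hF, hi, hwi]⟩
      have hmem := F.max'_mem hne
      simp only [hF, Finset.mem_filter, Finset.mem_range] at hmem
      exact ⟨F.max' hne, hmem.1, hmem.2,
        fun j hj hwj => F.le_max' j (by simp [hF, hj, hwj])⟩
    choose τ hτ1 hτ2 hτ3 using hτex
    set σ := succMap tail head p.2 with hσdef
    have hrn : ∀ v, r n v = r 0 v := by
      intro v
      show (f^[n] p).2.1 v = (f^[0] p).2.1 v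
      rw [hfix]
      rfl
    have hσw : ∀ v, σ v = w (τ v + 1) := by
      intro v
      have h1 : r n v = r (τ v + 1) v := by
        have he : n = (τ v + 1) + (n - (τ v + 1)) := by
          have := hτ1 v; omega
        rw [he]
        refine hconst v (τ v + 1) (n - (τ v + 1)) ?_
        intro j hj hj' hwj
        have hjn : j < n := by have := hτ1 v; omega
        have := hτ3 v j hjn hwj
        omega
      have h2 : r (τ v + 1) v = next (r (τ v) v) := by
        rw [hstep_r (τ v), hτ2 v, Function.update_self]
      calc σ v = head (r 0 v) := rfl
        _ = head (r n v) := by rw [hrn]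
        _ = head (next (r (τ v) v)) := by rw [h1, h2]
        _ = w (τ v + 1) := by rw [hstep_w (τ v), hτ2 v]
    have hw0 : w n = w 0 := by
      show (f^[n] p).1 = (f^[0] p).1
      rw [hfix]
      rfl
    have hreach : ∀ d v, n - τ v ≤ d → ∃ j, 0 < j ∧ σ^[j] v = w 0 := by
      intro d
      induction d with
      | zero => intro v hv; exact absurd hv (by have := hτ1 v; omega)
      | succ d ih =>
          intro v hv
          rcases Nat.lt_or_ge (τ v + 1) n with hlt | hge
          · have hτ' : τ v + 1 ≤ τ (σ v) := hτ3 (σ v) (τ v + 1) hlt (hσw v).symm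
            obtain ⟨j, hj, hjw⟩ := ih (σ v) (by omega)
            refine ⟨j + 1, by omega, ?_⟩
            rw [Function.iterate_succ_apply, hσw v]
            have hτσ : τ (σ v) < n := hτ1 (σ v)
            -- σ^[j] (w (τ v + 1)) = w 0 since σ v = w (τ v + 1)
            rw [← hσw v]
            exact hjw
          · have hn' : τ v + 1 = n := by have := hτ1 v; omega
            refine ⟨1, Nat.one_pos, ?_⟩
            rw [Function.iterate_one, hσw v, hn', hw0]
    constructor
    · obtain ⟨j, hj, hjw⟩ := hreach (n - τ (w 0)) (w 0) le_rfl
      exact ⟨j, hj, hjw⟩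
    · rintro v ⟨k, hk, hkv⟩
      obtain ⟨j, hj, hjw⟩ := hreach (n - τ v) v le_rfl
      exact reach_back' σ v (w 0) k j hk hkv hjw
  · intro hu
    have hiter : ∀ i, Unicycle tail head (f^[i] p) := by
      intro i
      induction i with
      | zero => exact hu
      | succ i ih =>
          rw [Function.iterate_succ_apply']
          exact step_unicycle' tail head next hnext (f^[i] p) ih
    have hcancel : ∀ (i : ℕ) (a b : V × RotorConfig tail), Unicycle tail head a →
        Unicycle tail head b → f^[i] a = f^[i] b → a = b := by
      intro i
      induction i with
      | zero => intro a b _ _ h; exact h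
      | succ i ih =>
          intro a b ha hb h
          rw [Function.iterate_succ_apply, Function.iterate_succ_apply] at h
          have hfab := ih (f a) (f b)
            (step_unicycle' tail head next hnext a ha)
            (step_unicycle' tail head next hnext b hb) h
          exact step_inj' tail head next hnext hcyc a b ha hb hfab
    obtain ⟨a, b, hab, h⟩ := Finite.exists_ne_map_eq_of_infinite (fun i : ℕ => f^[i] p)
    have h' : f^[a] p = f^[b] p := h
    rcases Nat.lt_or_ge a b with hlt | hge
    · refine ⟨b - a, by omega, ?_⟩
      have h2 : f^[a] (f^[b - a] p) = f^[a] p := by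
        rw [← Function.iterate_add_apply]
        have he : a + (b - a) = b := by omega
        rw [he]
        exact h'.symm
      exact hcancel a (f^[b - a] p) p (hiter _) hu h2
    · have hba : b < a := by omega
      refine ⟨a - b, by omega, ?_⟩
      have h2 : f^[b] (f^[a - b] p) = f^[b] p := by
        rw [← Function.iterate_add_apply]
        have he : b + (a - b) = a := by omega
        rw [he]
        exact h'
      exact hcancel b (f^[a - b] p) p (hiter _) hu h2
end

section
/- (Matrix-Tree Theorem) Let G be a digraph and v a vertex of G. The number of oriented spanning trees of G rooted at v equals the determinant of the reduced Laplacian Δ'(G) obtained by deleting from the Laplacian Δ(G) the row and column corresponding to v. -/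
/-- The reduced Laplacian: the Laplacian `Δ_{ij} = d_i·δ_{ij} − a_{ij}` with the row
and column corresponding to `v` deleted. -/
def reducedLaplacian {V E : Type} [Fintype E] [DecidableEq V] (tail head : E → V)
    (v : V) : Matrix {u : V // u ≠ v} {u : V // u ≠ v} ℤ :=
  fun i j => (if i = j then (outdeg tail i.1 : ℤ) else 0) - (numEdges tail head i.1 j.1 : ℤ)

/-- The successor map of a candidate spanning tree: every vertex other than the root
`v` follows its unique outgoing edge; the root is fixed. -/
def treeSucc {V E : Type} [DecidableEq V] (head : E → V) (v : V)
    (ρ : {u : V // u ≠ v} → E) : V → V :=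
  fun u => if h : u = v then u else head (ρ ⟨u, h⟩)

/-- An oriented spanning tree rooted at `v`: an acyclic subgraph in which every vertex
other than `v` has out-degree exactly one (given by `ρ`) and `v` has out-degree zero.
It is encoded by the choice `ρ` of one outgoing edge at each vertex `u ≠ v`, subject
to the edges `{ρ(u)}` containing no directed cycle. -/
def IsOrientedSpanningTree {V E : Type} [DecidableEq V] (tail head : E → V) (v : V)
    (ρ : {u : V // u ≠ v} → E) : Prop :=
  (∀ u, tail (ρ u) = u.1) ∧
  ∀ (u : {u : V // u ≠ v}) (k : ℕ), 0 < k → (treeSucc head v ρ)^[k] u.1 ≠ u.1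

namespace MTTProof

open Finset Matrix

set_option linter.unusedSectionVars false

variable {V E : Type} [Fintype V] [DecidableEq V] [Fintype E] [DecidableEq E]
variable (tail head : E → V) (v : V)

/-- one term of the row decomposition -/
def mttRow (i : {u : V // u ≠ v}) (e : E) : {u : V // u ≠ v} → ℤ :=
  fun j => (if i = j then 1 else 0) - (if head e = j.1 then 1 else 0)

lemma lapl_row (i j : {u : V // u ≠ v}) :
    reducedLaplacian tail head v i j
      = ∑ e ∈ univ.filter (fun e => tail e = i.1), mttRow head v i e j := by
  classical
  simp only [mttRow, Finset.sum_sub_distrib, reducedLaplacian]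
  congr 1
  · by_cases h : i = j
    · simp [h, outdeg]
    · simp [h]
  · rw [Finset.sum_boole, Finset.filter_filter]
    simp [numEdges]


set_option linter.unusedSectionVars false

/-- The matrix whose determinant is a single term of the expansion. -/
def mttM (ρ : {u : V // u ≠ v} → E) : Matrix {u : V // u ≠ v} {u : V // u ≠ v} ℤ :=
  Matrix.of fun i => mttRow head v i (ρ i)

lemma det_expand :
    (reducedLaplacian tail head v).det
      = ∑ ρ ∈ Fintype.piFinset
            (fun i : {u : V // u ≠ v} => univ.filter (fun e => tail e = i.1)),
          (mttM head v ρ).det := by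
  classical
  have h : reducedLaplacian tail head v
      = Matrix.of fun i => ∑ e ∈ univ.filter (fun e => tail e = i.1), mttRow head v i e := by
    ext i j
    rw [lapl_row]
    simp [Finset.sum_apply]
  rw [h]
  have := (Matrix.detRowAlternating (R := ℤ)
      (n := {u : V // u ≠ v})).toMultilinearMap.map_sum_finset
      (fun (i : {u : V // u ≠ v}) (e : E) => mttRow head v i e)
      (fun i : {u : V // u ≠ v} => univ.filter (fun e => tail e = i.1))
  simp only [Matrix.det, mttM]
  exact this


lemma det_eq_zero_of_cycle (ρ : {u : V // u ≠ v} → E)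
    (u : {u : V // u ≠ v}) (k : ℕ) (hk : 0 < k)
    (hcyc : (treeSucc head v ρ)^[k] u.1 = u.1) :
    (mttM head v ρ).det = 0 := by
  classical
  set f := treeSucc head v ρ with hf
  have hfv : f v = v := by simp [hf, treeSucc]
  have hfe : ∀ i : {u : V // u ≠ v}, head (ρ i) = f i.1 := by
    intro i
    simp [hf, treeSucc, i.2]
  set O : Finset V := (Finset.range k).image (fun m => f^[m] u.1) with hO
  have huO : u.1 ∈ O := Finset.mem_image.mpr ⟨0, Finset.mem_range.mpr hk, rfl⟩
  have hne : ∀ x ∈ O, x ≠ v := by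
    intro x hx hxv
    obtain ⟨m, hm, hmx⟩ := Finset.mem_image.mp hx
    have h1 : f^[k - m] (f^[m] u.1) = f^[k - m] v := by rw [hmx, hxv]
    rw [← Function.iterate_add_apply, Nat.sub_add_cancel (le_of_lt (Finset.mem_range.mp hm)),
      Function.iterate_fixed hfv, hcyc] at h1
    exact u.2 h1
  have hper : ∀ x ∈ O, f^[k] x = x := by
    intro x hx
    obtain ⟨m, hm, hmx⟩ := Finset.mem_image.mp hx
    rw [← hmx, ← Function.iterate_add_apply, Nat.add_comm, Function.iterate_add_apply, hcyc]
  have hOc : ∀ x ∈ O, f x ∈ O := by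
    intro x hx
    obtain ⟨m, hm, hmx⟩ := Finset.mem_image.mp hx
    rcases lt_or_eq_of_le (Nat.succ_le_of_lt (Finset.mem_range.mp hm)) with h | h
    · exact Finset.mem_image.mpr ⟨m + 1, Finset.mem_range.mpr h, by
        rw [← hmx, ← Function.iterate_succ_apply' f m]⟩
    · refine Finset.mem_image.mpr ⟨0, Finset.mem_range.mpr hk, ?_⟩
      rw [← hmx, ← Function.iterate_succ_apply' f m, h, hcyc]; simp
  have hOiter : ∀ (n : ℕ) (x : V), x ∈ O → f^[n] x ∈ O := by
    intro n
    induction n with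
    | zero => intro x hx; exact hx
    | succ n ih =>
        intro x hx
        rw [Function.iterate_succ_apply' f n x]
        exact hOc _ (ih x hx)
  have hret : ∀ x ∈ O, f^[k-1] (f x) = x := by
    intro x hx
    have := hper x hx
    rwa [← Nat.succ_pred_eq_of_pos hk, Function.iterate_succ_apply] at this
  have hsurj : ∀ y ∈ O, ∃ x, x ∈ O ∧ f x = y := by
    intro y hy
    refine ⟨f^[k-1] y, hOiter _ _ hy, ?_⟩
    have := hper y hy
    rwa [← Nat.succ_pred_eq_of_pos hk, Function.iterate_succ_apply'] at this
  -- the nonzero kernel vector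
  set w := fun i : {u : V // u ≠ v} => if i.1 ∈ O then (1:ℤ) else 0 with hw
  have hw0 : w ≠ 0 := by
    intro h
    have := congrFun h u
    simp [hw, huO] at this
  have hwM : w ᵥ* (mttM head v ρ) = 0 := by
    funext j
    have hcard : (univ.filter (fun i : {u : V // u ≠ v} => i.1 ∈ O ∧ f i.1 = j.1)).card
        = (if j.1 ∈ O then 1 else 0) := by
      by_cases hj : j.1 ∈ O
      · rw [if_pos hj]
        obtain ⟨x, hxO, hfx⟩ := hsurj j.1 hj
        rw [Finset.card_eq_one]
        refine ⟨⟨x, hne x hxO⟩, ?_⟩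
        ext i
        simp only [Finset.mem_filter, Finset.mem_univ, true_and, Finset.mem_singleton]
        constructor
        · rintro ⟨hiO, hfi⟩
          have h1 : f^[k-1] (f i.1) = i.1 := hret _ hiO
          have h2 : f^[k-1] (f x) = x := hret _ hxO
          rw [hfi] at h1
          rw [hfx] at h2
          exact Subtype.ext (h1.symm.trans h2)
        · rintro rfl
          exact ⟨hxO, hfx⟩
      · rw [if_neg hj]
        rw [Finset.card_eq_zero]
        ext i
        simp only [Finset.mem_filter, Finset.mem_univ, true_and, Finset.notMem_empty,
          iff_false, not_and]
        intro hiO hfi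
        exact hj (hfi ▸ hOc _ hiO)
    simp only [Matrix.vecMul, dotProduct, mttM, Matrix.of_apply, mttRow, hw,
      Pi.zero_apply, hfe]
    rw [Finset.sum_congr rfl (fun i _ => by
      rw [show (if (i:V) ∈ O then (1:ℤ) else 0) *
          ((if i = j then 1 else 0) - (if f i.1 = j.1 then 1 else 0))
        = (if i = j then (if (j:V) ∈ O then (1:ℤ) else 0) else 0)
          - (if (i:V) ∈ O ∧ f i.1 = j.1 then 1 else 0) from by
        by_cases h1 : (i:V) ∈ O <;> by_cases h2 : i = j <;>
          by_cases h3 : f i.1 = j.1 <;> subst_eqs <;> simp_all])]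
    rw [Finset.sum_sub_distrib, Finset.sum_ite_eq' univ j, Finset.sum_boole, hcard]
    simp
  exact Matrix.exists_vecMul_eq_zero_iff.mp ⟨w, hw0, hwM⟩


lemma det_eq_one_of_acyclic (ρ : {u : V // u ≠ v} → E)
    (hac : ∀ (u : {u : V // u ≠ v}) (k : ℕ), 0 < k → (treeSucc head v ρ)^[k] u.1 ≠ u.1) :
    (mttM head v ρ).det = 1 := by
  classical
  set f := treeSucc head v ρ with hf
  have hfv : f v = v := by simp [hf, treeSucc]
  have hfe : ∀ i : {u : V // u ≠ v}, head (ρ i) = f i.1 := by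
    intro i
    simp [hf, treeSucc, i.2]
  have hreach : ∀ x : V, ∃ m, f^[m] x = v := by
    intro x
    by_contra hcon
    push_neg at hcon
    have key : ∀ a b : ℕ, a < b → f^[a] x = f^[b] x → False := by
      intro a b hab heq
      refine hac ⟨f^[a] x, hcon a⟩ (b - a) (Nat.sub_pos_of_lt hab) ?_
      show f^[b - a] (f^[a] x) = f^[a] x
      rw [← Function.iterate_add_apply, Nat.sub_add_cancel hab.le, ← heq]
    obtain ⟨a, b, hne, heq⟩ := Fintype.exists_ne_map_eq_of_card_lt
      (fun n : Fin (Fintype.card V + 1) => f^[n.1] x) (by simp)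
    rcases lt_or_gt_of_ne hne with h | h
    · exact key a.1 b.1 h heq
    · exact key b.1 a.1 h heq.symm
  set r := fun i : {u : V // u ≠ v} => Nat.find (hreach i.1) with hr
  have hrs : ∀ i, f^[r i] i.1 = v := fun i => Nat.find_spec (hreach i.1)
  have hrpos : ∀ i, 0 < r i := by
    intro i
    rcases Nat.eq_zero_or_pos (r i) with h | h
    · have h0 := hrs i
      rw [h] at h0
      simp only [Function.iterate_zero, id] at h0
      exact absurd h0 i.2
    · exact h
  have hlt : ∀ i j : {u : V // u ≠ v}, f i.1 = j.1 → r j < r i := by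
    intro i j hij
    have h1 : f^[r i - 1] j.1 = v := by
      have := hrs i
      rw [← Nat.succ_pred_eq_of_pos (hrpos i), Function.iterate_succ_apply, hij] at this
      exact this
    have h2 : r j ≤ r i - 1 := Nat.find_le h1
    exact lt_of_le_of_lt h2 (Nat.sub_lt (hrpos i) one_pos)
  have hBT : (mttM head v ρ)ᵀ.BlockTriangular r := by
    intro i j hij
    have h1 : j ≠ i := fun h => by subst h; exact lt_irrefl _ hij
    have h2 : f j.1 ≠ i.1 := fun h => absurd (hlt j i h) (not_lt.mpr hij.le)
    simp [mttM, mttRow, hfe, h1, h2]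
  have hblocks : ∀ a : ℕ, (mttM head v ρ)ᵀ.toSquareBlock r a = 1 := by
    intro a
    ext i j
    have h2 : f (j.1).1 ≠ (i.1).1 := by
      intro h
      have := hlt j.1 i.1 h
      rw [i.2, j.2] at this
      exact lt_irrefl a this
    rcases eq_or_ne i j with h | h
    · subst h
      simp [Matrix.toSquareBlock_def, mttM, mttRow, hfe, h2, Matrix.one_apply]
    · have h1 : (j.1) ≠ (i.1) := fun hh => h (Subtype.ext hh.symm)
      simp [Matrix.toSquareBlock_def, mttM, mttRow, hfe, h1, h2, Matrix.one_apply, h]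
  rw [← Matrix.det_transpose]
  rw [hBT.det]
  exact Finset.prod_eq_one (fun a _ => by rw [hblocks a, Matrix.det_one])


end MTTProof

open Finset Matrix MTTProof

/-- **Matrix-Tree Theorem.**  For a digraph `G` and a vertex `v`, the number of
oriented spanning trees of `G` rooted at `v` equals the determinant of the reduced
Laplacian obtained by deleting from the Laplacian the row and column of `v`. -/
theorem matrix_tree_theorem
    {V E : Type} [Fintype V] [DecidableEq V] [Fintype E] [DecidableEq E]
    (tail head : E → V) (v : V) :
    (Nat.card {ρ : {u : V // u ≠ v} → E // IsOrientedSpanningTree tail head v ρ} : ℤ)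
      = (reducedLaplacian tail head v).det := by
  classical
  rw [det_expand]
  have hstep : ∀ ρ ∈ Fintype.piFinset
      (fun i : {u : V // u ≠ v} => univ.filter (fun e => tail e = i.1)),
      (mttM head v ρ).det = (if (∀ (u : {u : V // u ≠ v}) (k : ℕ), 0 < k →
        (treeSucc head v ρ)^[k] u.1 ≠ u.1) then (1:ℤ) else 0) := by
    intro ρ _
    by_cases h : ∀ (u : {u : V // u ≠ v}) (k : ℕ), 0 < k → (treeSucc head v ρ)^[k] u.1 ≠ u.1
    · rw [if_pos h, det_eq_one_of_acyclic head v ρ h]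
    · rw [if_neg h]
      push_neg at h
      obtain ⟨u, k, hk, hcyc⟩ := h
      exact det_eq_zero_of_cycle head v ρ u k hk hcyc
  rw [Finset.sum_congr rfl hstep, Finset.sum_boole]
  congr 1
  rw [Nat.card_eq_fintype_card, Fintype.card_subtype]
  congr 1
  ext ρ
  simp only [Finset.mem_filter, Finset.mem_univ, true_and, Fintype.mem_piFinset,
    IsOrientedSpanningTree]
  simp
end

section
/- Let G be an Eulerian digraph with m edges, with a fixed cyclic ordering of the outgoing edges at each vertex, and let U = (w, ρ) be a unicycle on G. Iterating the rotor-router operation m times starting from U, the chip traverses an Eulerian tour of G (each directed edge of G is traversed exactly once), each rotor makes exactly one full turn, and the state returns to U. -/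
/-- The in-degree of a vertex. -/
def indeg {V E : Type} [Fintype E] [DecidableEq V] (head : E → V) (v : V) : ℕ :=
  (Finset.univ.filter (fun e => head e = v)).card

section RotorAux
set_option linter.unusedSectionVars false

open Function Finset

/-- helper: if each term is at most 1 and the sum is at least the cardinality,
then each term is at least (hence exactly) 1. -/
lemma forall_one_le_of_card_le_sum {α : Type*} {s : Finset α} {g : α → ℕ}
    (h1 : ∀ a ∈ s, g a ≤ 1) (h : s.card ≤ ∑ a ∈ s, g a) : ∀ a ∈ s, 1 ≤ g a := by
  intro a ha
  by_contra hc
  have hga : g a = 0 := by omega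
  have hlt : ∑ x ∈ s, g x < ∑ x ∈ s, 1 :=
    Finset.sum_lt_sum h1 ⟨a, ha, by omega⟩
  rw [Finset.sum_const, smul_eq_mul, mul_one] at hlt
  omega

variable {V E : Type} [Fintype V] [DecidableEq V] [Fintype E] [DecidableEq E]
variable (tail head : E → V) (next : E → E)

lemma tail_iterate_next (hnext : ∀ e, tail (next e) = tail e) (k : ℕ) (e : E) :
    tail (next^[k] e) = tail e := by
  induction k with
  | zero => rfl
  | succ n ih => rw [Function.iterate_succ_apply', hnext, ih]

lemma next_period_pos (hnext : ∀ e, tail (next e) = tail e)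
    (hcyc : ∀ e e' : E, tail e = tail e' → ∃ k, next^[k] e = e') (e : E) :
    ∃ k, 0 < k ∧ next^[k] e = e := by
  obtain ⟨j, hj⟩ := hcyc (next e) e (hnext e)
  exact ⟨j + 1, Nat.succ_pos j, by rw [Function.iterate_succ_apply]; exact hj⟩

lemma next_injective (hnext : ∀ e, tail (next e) = tail e)
    (hcyc : ∀ e e' : E, tail e = tail e' → ∃ k, next^[k] e = e') :
    Function.Injective next := by
  intro a b hab
  obtain ⟨s, hs, hsa⟩ := next_period_pos tail next hnext hcyc a
  obtain ⟨t, ht, htb⟩ := next_period_pos tail next hnext hcyc b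
  have ha : next^[s * t] a = a := Function.IsPeriodicPt.mul_const hsa t
  have hb : next^[s * t] b = b := by
    rw [mul_comm]; exact Function.IsPeriodicPt.mul_const htb s
  obtain ⟨n, hn⟩ : ∃ n, s * t = n + 1 := by
    have : 0 < s * t := Nat.mul_pos hs ht
    exact ⟨s * t - 1, by omega⟩
  rw [← ha, ← hb, hn, Function.iterate_succ_apply, Function.iterate_succ_apply, hab]

lemma minimalPeriod_next_eq (hnext : ∀ e, tail (next e) = tail e)
    (hcyc : ∀ e e' : E, tail e = tail e' → ∃ k, next^[k] e = e') (e : E) :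
    Function.minimalPeriod next e = outdeg tail (tail e) := by
  have hpos : 0 < Function.minimalPeriod next e := by
    obtain ⟨k, hk, hke⟩ := next_period_pos tail next hnext hcyc e
    exact Function.IsPeriodicPt.minimalPeriod_pos hk hke
  have horb : (Finset.range (Function.minimalPeriod next e)).image (fun k => next^[k] e)
      = Finset.univ.filter (fun e' => tail e' = tail e) := by
    apply Finset.Subset.antisymm
    · intro x hx
      simp only [Finset.mem_image, Finset.mem_range] at hx
      obtain ⟨k, _, rfl⟩ := hx
      simp [Finset.mem_filter, tail_iterate_next tail next hnext]
    · intro e' he'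
      simp only [Finset.mem_filter, Finset.mem_univ, true_and] at he'
      obtain ⟨k, hk⟩ := hcyc e e' he'.symm
      simp only [Finset.mem_image, Finset.mem_range]
      exact ⟨k % Function.minimalPeriod next e, Nat.mod_lt _ hpos,
        by rw [Function.iterate_mod_minimalPeriod_eq]; exact hk⟩
  have hcard : ((Finset.range (Function.minimalPeriod next e)).image
      (fun k => next^[k] e)).card = Function.minimalPeriod next e := by
    rw [Finset.card_image_of_injOn, Finset.card_range]
    rw [Finset.coe_range]
    exact Function.iterate_injOn_Iio_minimalPeriod
  unfold outdeg
  rw [← horb, hcard]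

lemma iterate_outdeg (hnext : ∀ e, tail (next e) = tail e)
    (hcyc : ∀ e e' : E, tail e = tail e' → ∃ k, next^[k] e = e') (e : E) :
    next^[outdeg tail (tail e)] e = e := by
  rw [← minimalPeriod_next_eq tail next hnext hcyc e]
  exact Function.iterate_minimalPeriod

lemma outdeg_dvd_of_iterate_eq (hnext : ∀ e, tail (next e) = tail e)
    (hcyc : ∀ e e' : E, tail e = tail e' → ∃ k, next^[k] e = e') (e : E) {a b : ℕ}
    (hab : a ≤ b) (h : next^[a] e = next^[b] e) : outdeg tail (tail e) ∣ b - a := by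
  have hper : next^[b - a] e = e := by
    have hinj : Function.Injective (next^[a]) :=
      Function.Injective.iterate (next_injective tail next hnext hcyc) a
    apply hinj
    rw [← Function.iterate_add_apply, Nat.add_sub_cancel' hab]
    exact h.symm
  rw [← minimalPeriod_next_eq tail next hnext hcyc e]
  exact Function.IsPeriodicPt.minimalPeriod_dvd hper

variable (hnext : ∀ e, tail (next e) = tail e) (p : V × RotorConfig tail)

/-- chip position after `n` rotor-router steps. -/
def chipAt (n : ℕ) : V := ((rotorStep tail head next hnext)^[n] p).1

/-- rotor configuration after `n` rotor-router steps. -/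
def rotAt (n : ℕ) : V → E := ((rotorStep tail head next hnext)^[n] p).2.1

/-- the edge traversed at step `n`. -/
def edgeAt (n : ℕ) : E :=
  next (rotAt tail head next hnext p n (chipAt tail head next hnext p n))

/-- the number of times the chip has been emitted from `v` during the first `n` steps. -/
def exitCount (n : ℕ) (v : V) : ℕ :=
  ((Finset.range n).filter (fun i => chipAt tail head next hnext p i = v)).card

lemma chipAt_zero : chipAt tail head next hnext p 0 = p.1 := rfl

lemma chipAt_succ (n : ℕ) :
    chipAt tail head next hnext p (n + 1) = head (edgeAt tail head next hnext p n) := by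
  unfold chipAt edgeAt rotAt
  rw [Function.iterate_succ_apply']
  rfl

lemma rotAt_succ (n : ℕ) :
    rotAt tail head next hnext p (n + 1)
      = Function.update (rotAt tail head next hnext p n)
          (chipAt tail head next hnext p n) (edgeAt tail head next hnext p n) := by
  unfold chipAt edgeAt rotAt
  rw [Function.iterate_succ_apply']
  rfl

lemma exitCount_zero (v : V) : exitCount tail head next hnext p 0 v = 0 := by
  simp [exitCount]

lemma exitCount_succ (n : ℕ) (v : V) :
    exitCount tail head next hnext p (n + 1) v
      = exitCount tail head next hnext p n v
        + if chipAt tail head next hnext p n = v then 1 else 0 := by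
  unfold exitCount
  rw [Finset.range_add_one, Finset.filter_insert]
  by_cases h : chipAt tail head next hnext p n = v
  · rw [if_pos h, if_pos h, Finset.card_insert_of_notMem (by simp)]
  · rw [if_neg h, if_neg h, add_zero]

lemma exitCount_mono {n n' : ℕ} (h : n ≤ n') (v : V) :
    exitCount tail head next hnext p n v ≤ exitCount tail head next hnext p n' v :=
  Finset.card_le_card (Finset.filter_subset_filter _ (Finset.range_subset_range.2 h))

lemma rotAt_eq (n : ℕ) (v : V) :
    rotAt tail head next hnext p n v
      = next^[exitCount tail head next hnext p n v] (p.2.1 v) := by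
  induction n with
  | zero => rw [exitCount_zero]; rfl
  | succ n ih =>
    rw [rotAt_succ, exitCount_succ]
    by_cases h : chipAt tail head next hnext p n = v
    · rw [if_pos h]
      rw [h, Function.update_self]
      unfold edgeAt
      rw [h, ih]
      exact (Function.iterate_succ_apply' next _ _).symm
    · rw [Function.update_of_ne (Ne.symm h), if_neg h, add_zero, ih]

lemma edgeAt_eq (n : ℕ) :
    edgeAt tail head next hnext p n
      = next^[exitCount tail head next hnext p n (chipAt tail head next hnext p n) + 1]
          (p.2.1 (chipAt tail head next hnext p n)) := by
  unfold edgeAt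
  rw [rotAt_eq]
  exact (Function.iterate_succ_apply' next _ _).symm

lemma tail_edgeAt (n : ℕ) :
    tail (edgeAt tail head next hnext p n) = chipAt tail head next hnext p n := by
  rw [edgeAt_eq, tail_iterate_next tail next hnext, p.2.2]

lemma exitCount_succ_eq (n : ℕ) (v : V) :
    exitCount tail head next hnext p (n + 1) v
      = (if p.1 = v then 1 else 0)
        + ((Finset.range n).filter
            (fun i => head (edgeAt tail head next hnext p i) = v)).card := by
  induction n with
  | zero =>
    rw [exitCount_succ, exitCount_zero, chipAt_zero]
    simp
  | succ n ih =>
    rw [exitCount_succ, ih, chipAt_succ, Finset.range_add_one, Finset.filter_insert]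
    by_cases h : head (edgeAt tail head next hnext p n) = v
    · rw [if_pos h, if_pos h, Finset.card_insert_of_notMem (by simp)]
      ring
    · rw [if_neg h, if_neg h, add_zero]

lemma head_count_eq_sum (n : ℕ) (v : V) :
    ((Finset.range n).filter (fun i => head (edgeAt tail head next hnext p i) = v)).card
      = ∑ e ∈ Finset.univ.filter (fun e => head e = v),
          ((Finset.range n).filter (fun i => edgeAt tail head next hnext p i = e)).card := by
  rw [Finset.card_eq_sum_card_fiberwise
      (f := fun i => edgeAt tail head next hnext p i)
      (t := Finset.univ.filter (fun e => head e = v))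
      (fun i hi => by
        simp only [Finset.mem_coe, Finset.mem_filter, Finset.mem_univ, true_and] at hi ⊢
        exact hi.2)]
  apply Finset.sum_congr rfl
  intro e he
  simp only [Finset.mem_filter, Finset.mem_univ, true_and] at he
  congr 1
  ext i
  simp only [Finset.mem_filter, Finset.mem_range]
  constructor
  · rintro ⟨⟨hi, -⟩, h2⟩; exact ⟨hi, h2⟩
  · rintro ⟨hi, h2⟩; exact ⟨⟨hi, by rw [h2]; exact he⟩, h2⟩

lemma sum_exitCount (n : ℕ) :
    ∑ v : V, exitCount tail head next hnext p n v = n := by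
  have h := Finset.card_eq_sum_card_fiberwise
    (f := fun i => chipAt tail head next hnext p i) (s := Finset.range n)
    (t := Finset.univ) (fun x _ => Finset.mem_univ _)
  rw [Finset.card_range] at h
  unfold exitCount
  exact h.symm

lemma sum_outdeg : ∑ v : V, outdeg tail v = Fintype.card E := by
  have h := Finset.card_eq_sum_card_fiberwise
    (f := tail) (s := Finset.univ) (t := Finset.univ) (fun x _ => Finset.mem_univ _)
  rw [Finset.card_univ] at h
  unfold outdeg
  exact h.symm

end RotorAux

/-- **Unicycles traverse Eulerian tours.**  Let `G` be an Eulerian digraph with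
`m` edges and a fixed cyclic ordering of the outgoing edges at each vertex, and let
`(w, ρ)` be a unicycle.  Iterating the rotor-router operation `m` times: the state
returns to `(w, ρ)`; the chip traverses each directed edge of `G` exactly once (an
Eulerian tour, since consecutive traversed edges are automatically incident); and
each rotor makes exactly one full turn, i.e. the chip is emitted from each vertex `v`
exactly `d_v` times. -/
theorem unicycle_eulerian_tour
    {V E : Type} [Fintype V] [DecidableEq V] [Fintype E] [DecidableEq E]
    (tail head : E → V) (next : E → E)
    (hnext : ∀ e, tail (next e) = tail e)
    (hcyc : ∀ e e' : E, tail e = tail e' → ∃ k, next^[k] e = e')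
    (hsc : ∀ u v : V,
      Relation.ReflTransGen (fun a b => ∃ e, tail e = a ∧ head e = b) u v)
    (hbal : ∀ v : V, indeg head v = outdeg tail v)
    (p : V × RotorConfig tail) (hp : Unicycle tail head p) :
    (rotorStep tail head next hnext)^[Fintype.card E] p = p ∧
    Function.Bijective (fun k : Fin (Fintype.card E) =>
      next ((((rotorStep tail head next hnext)^[k.1] p).2).1
        (((rotorStep tail head next hnext)^[k.1] p).1))) ∧
    ∀ v : V,
      (Finset.univ.filter (fun k : Fin (Fintype.card E) =>
          (((rotorStep tail head next hnext)^[k.1] p).1 = v))).card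
        = outdeg tail v := by
  classical
  -- pigeonhole: some edge repeats
  have hQ : ∃ b, ∃ a, a < b ∧
      edgeAt tail head next hnext p a = edgeAt tail head next hnext p b := by
    obtain ⟨x, y, hxy, hfe⟩ := Fintype.exists_ne_map_eq_of_card_lt
      (fun k : Fin (Fintype.card E + 1) => edgeAt tail head next hnext p k.1)
      (by simp)
    have hxy' : x.1 ≠ y.1 := fun h => hxy (Fin.ext h)
    rcases lt_or_gt_of_ne hxy' with h | h
    · exact ⟨y.1, x.1, h, hfe⟩
    · exact ⟨x.1, y.1, h, hfe.symm⟩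
  obtain ⟨b0, ⟨a, hab, heab⟩, hmin⟩ : ∃ b0, (∃ a, a < b0 ∧
      edgeAt tail head next hnext p a = edgeAt tail head next hnext p b0) ∧
      ∀ b' < b0, ¬ ∃ a, a < b' ∧
        edgeAt tail head next hnext p a = edgeAt tail head next hnext p b' :=
    ⟨Nat.find hQ, Nat.find_spec hQ, fun b' hb' => Nat.find_min hQ hb'⟩
  -- the first b0 traversed edges are pairwise distinct
  have hinjOn : ∀ i j, i < b0 → j < b0 →
      edgeAt tail head next hnext p i = edgeAt tail head next hnext p j → i = j := by
    intro i j hi hj hij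
    rcases lt_trichotomy i j with h | h | h
    · exact absurd ⟨i, h, hij⟩ (hmin j hj)
    · exact h
    · exact absurd ⟨j, h, hij.symm⟩ (hmin i hi)
  -- each edge is traversed at most once in the first b0 steps
  have hcnt_le : ∀ e : E,
      ((Finset.range b0).filter (fun i => edgeAt tail head next hnext p i = e)).card ≤ 1 := by
    intro e
    apply Finset.card_le_one.2
    intro i hi j hj
    simp only [Finset.mem_filter, Finset.mem_range] at hi hj
    exact hinjOn i j hi.1 hj.1 (hi.2.trans hj.2.symm)
  have hsum_le : ∀ v : V,
      (∑ e ∈ Finset.univ.filter (fun e => head e = v),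
        ((Finset.range b0).filter (fun i => edgeAt tail head next hnext p i = e)).card)
      ≤ indeg head v := by
    intro v
    calc (∑ e ∈ Finset.univ.filter (fun e => head e = v),
          ((Finset.range b0).filter (fun i => edgeAt tail head next hnext p i = e)).card)
        ≤ ∑ _e ∈ Finset.univ.filter (fun e => head e = v), 1 :=
          Finset.sum_le_sum (fun e _ => hcnt_le e)
      _ = indeg head v := by rw [Finset.sum_const, smul_eq_mul, mul_one]; rfl
  -- analysis of the first repeated edge: it must be emitted from the starting vertex
  have hchipa : chipAt tail head next hnext p a = chipAt tail head next hnext p b0 := by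
    rw [← tail_edgeAt tail head next hnext p a, ← tail_edgeAt tail head next hnext p b0, heab]
  have hstepa : exitCount tail head next hnext p (a + 1) (chipAt tail head next hnext p b0)
      = exitCount tail head next hnext p a (chipAt tail head next hnext p b0) + 1 := by
    rw [exitCount_succ, if_pos hchipa]
  have hlt : exitCount tail head next hnext p a (chipAt tail head next hnext p b0)
      < exitCount tail head next hnext p b0 (chipAt tail head next hnext p b0) := by
    have := exitCount_mono tail head next hnext p (show a + 1 ≤ b0 by omega)
      (chipAt tail head next hnext p b0)
    omega
  have hiter : next^[exitCount tail head next hnext p a (chipAt tail head next hnext p b0) + 1]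
        (p.2.1 (chipAt tail head next hnext p b0))
      = next^[exitCount tail head next hnext p b0 (chipAt tail head next hnext p b0) + 1]
        (p.2.1 (chipAt tail head next hnext p b0)) := by
    have h1 := edgeAt_eq tail head next hnext p a
    rw [hchipa] at h1
    have h2 := edgeAt_eq tail head next hnext p b0
    rw [← h1, ← h2, heab]
  have hdvd := outdeg_dvd_of_iterate_eq tail next hnext hcyc
    (p.2.1 (chipAt tail head next hnext p b0)) (by omega) hiter
  rw [p.2.2] at hdvd
  have hged : outdeg tail (chipAt tail head next hnext p b0)
      ≤ exitCount tail head next hnext p b0 (chipAt tail head next hnext p b0) := by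
    have := Nat.le_of_dvd (by omega) hdvd
    omega
  -- entering/exiting balance at the repeat point
  have hsucceq := exitCount_succ_eq tail head next hnext p b0
    (chipAt tail head next hnext p b0)
  rw [head_count_eq_sum] at hsucceq
  have hCsucc : exitCount tail head next hnext p (b0 + 1) (chipAt tail head next hnext p b0)
      = exitCount tail head next hnext p b0 (chipAt tail head next hnext p b0) + 1 := by
    rw [exitCount_succ, if_pos rfl]
  have hbalv := hbal (chipAt tail head next hnext p b0)
  have hsle := hsum_le (chipAt tail head next hnext p b0)
  have hpv : p.1 = chipAt tail head next hnext p b0 := by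
    by_contra hne'
    rw [if_neg hne'] at hsucceq
    omega
  rw [if_pos hpv] at hsucceq
  have hw : chipAt tail head next hnext p b0 = p.1 := hpv.symm
  have hCw : exitCount tail head next hnext p b0 (chipAt tail head next hnext p b0)
      = outdeg tail (chipAt tail head next hnext p b0) := by omega
  -- the starting vertex is fully entered: every edge into it is traversed
  have hPw : ∀ e, head e = p.1 →
      1 ≤ ((Finset.range b0).filter (fun i => edgeAt tail head next hnext p i = e)).card := by
    have hcard : (Finset.univ.filter
        (fun e => head e = chipAt tail head next hnext p b0)).card
        = indeg head (chipAt tail head next hnext p b0) := rfl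
    have h := forall_one_le_of_card_le_sum
      (s := Finset.univ.filter (fun e => head e = chipAt tail head next hnext p b0))
      (g := fun e => ((Finset.range b0).filter
        (fun i => edgeAt tail head next hnext p i = e)).card)
      (fun e' _ => hcnt_le e') (by beta_reduce; omega)
    intro e he
    exact h e (Finset.mem_filter.2 ⟨Finset.mem_univ e, by rw [he, hw]⟩)
  -- exit/entry balance away from the start
  have hbalx : ∀ x : V, x ≠ p.1 →
      exitCount tail head next hnext p b0 x
        = ∑ e ∈ Finset.univ.filter (fun e => head e = x),
            ((Finset.range b0).filter (fun i => edgeAt tail head next hnext p i = e)).card := by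
    intro x hx
    have h1 := exitCount_succ_eq tail head next hnext p b0 x
    rw [head_count_eq_sum, if_neg (fun h => hx h.symm)] at h1
    have h2 : exitCount tail head next hnext p (b0 + 1) x
        = exitCount tail head next hnext p b0 x := by
      rw [exitCount_succ, if_neg (by rw [hw]; exact fun h => hx h.symm), add_zero]
    omega
  have hCle : ∀ x : V, exitCount tail head next hnext p b0 x ≤ outdeg tail x := by
    intro x
    by_cases hx : x = p.1
    · subst hx
      rw [← hw]
      exact le_of_eq hCw
    · have hb1 := hbalx x hx
      have hb2 := hsum_le x
      have hb3 := hbal x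
      omega
  -- a vertex whose initial rotor edge has been traversed is fully exited
  have hL2 : ∀ u : V,
      1 ≤ ((Finset.range b0).filter
        (fun i => edgeAt tail head next hnext p i = p.2.1 u)).card →
      exitCount tail head next hnext p b0 u = outdeg tail u := by
    intro u hu
    obtain ⟨i, hi⟩ := Finset.card_pos.mp (show 0 < ((Finset.range b0).filter
      (fun i => edgeAt tail head next hnext p i = p.2.1 u)).card by omega)
    simp only [Finset.mem_filter, Finset.mem_range] at hi
    obtain ⟨hib, hie⟩ := hi
    have hchip : chipAt tail head next hnext p i = u := by
      have h := tail_edgeAt tail head next hnext p i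
      rw [hie, p.2.2] at h
      exact h.symm
    have h0 : next^[0] (p.2.1 u)
        = next^[exitCount tail head next hnext p i u + 1] (p.2.1 u) := by
      rw [Function.iterate_zero_apply]
      have h := edgeAt_eq tail head next hnext p i
      rw [hchip] at h
      rw [← h, hie]
    have hdvd2 := outdeg_dvd_of_iterate_eq tail next hnext hcyc (p.2.1 u) (Nat.zero_le _) h0
    rw [p.2.2] at hdvd2
    have hlow : outdeg tail u ≤ exitCount tail head next hnext p i u + 1 :=
      Nat.le_of_dvd (by omega) (by simpa using hdvd2)
    have hstep : exitCount tail head next hnext p (i + 1) u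
        = exitCount tail head next hnext p i u + 1 := by
      rw [exitCount_succ, if_pos hchip]
    have hm := exitCount_mono tail head next hnext p (show i + 1 ≤ b0 by omega) u
    have := hCle u
    omega
  -- a fully exited vertex is fully entered
  have hfullP : ∀ u : V, exitCount tail head next hnext p b0 u = outdeg tail u →
      ∀ e, head e = u → 1 ≤ ((Finset.range b0).filter
        (fun i => edgeAt tail head next hnext p i = e)).card := by
    intro u hu e he
    by_cases hx : u = p.1
    · exact hPw e (by rw [he, hx])
    · have hbx := hbalx u hx
      have hbu := hbal u
      have hcard : (Finset.univ.filter (fun e' => head e' = u)).card = indeg head u := rfl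
      exact forall_one_le_of_card_le_sum
        (s := Finset.univ.filter (fun e' => head e' = u))
        (g := fun e => ((Finset.range b0).filter
          (fun i => edgeAt tail head next hnext p i = e)).card)
        (fun e' _ => hcnt_le e') (by beta_reduce; omega) e
        (Finset.mem_filter.2 ⟨Finset.mem_univ e, he⟩)
  -- every vertex reaches the start along the rotor successor map
  have hreach : ∀ u : V, ∃ N, (succMap tail head p.2)^[N] u = p.1 := by
    intro u
    obtain ⟨x, y, hxy, hfe⟩ := Finite.exists_ne_map_eq_of_infinite
      (fun n : ℕ => (succMap tail head p.2)^[n] u)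
    have hpair : ∃ x y : ℕ, x < y ∧
        (succMap tail head p.2)^[x] u = (succMap tail head p.2)^[y] u := by
      rcases lt_or_gt_of_ne hxy with h | h
      · exact ⟨x, y, h, hfe⟩
      · exact ⟨y, x, h, hfe.symm⟩
    obtain ⟨x, y, hlt', hfe'⟩ := hpair
    have hper : (succMap tail head p.2)^[y - x] ((succMap tail head p.2)^[x] u)
        = (succMap tail head p.2)^[x] u := by
      rw [← Function.iterate_add_apply]
      have hyx : y - x + x = y := by omega
      rw [hyx, ← hfe']
    obtain ⟨j, hj⟩ := hp.2 _ ⟨y - x, by omega, hper⟩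
    obtain ⟨k, hk0, hkw⟩ := hp.1
    have hkw' : Function.IsPeriodicPt (succMap tail head p.2) k p.1 := hkw
    have hkj : (succMap tail head p.2)^[k * j] p.1 = p.1 :=
      Function.IsPeriodicPt.mul_const hkw' j
    have hjle : j ≤ k * j := Nat.le_mul_of_pos_left j hk0
    refine ⟨(k * j - j) + x, ?_⟩
    rw [Function.iterate_add_apply, ← hj, ← Function.iterate_add_apply]
    have : k * j - j + j = k * j := by omega
    rw [this]
    exact hkj
  -- full-turn property propagates backwards along the rotor successor map
  have hPall : ∀ (N : ℕ) (u : V), (succMap tail head p.2)^[N] u = p.1 →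
      ∀ e, head e = u → 1 ≤ ((Finset.range b0).filter
        (fun i => edgeAt tail head next hnext p i = e)).card := by
    intro N
    induction N with
    | zero =>
      intro u h e he
      rw [Function.iterate_zero_apply] at h
      subst h
      exact hPw e he
    | succ N ih =>
      intro u h e he
      rw [Function.iterate_succ_apply] at h
      have hP := ih _ h
      have h1 : 1 ≤ ((Finset.range b0).filter
          (fun i => edgeAt tail head next hnext p i = p.2.1 u)).card :=
        hP (p.2.1 u) rfl
      exact hfullP u (hL2 u h1) e he
  -- hence every vertex is fully exited during the first b0 steps
  have hCall : ∀ u : V, exitCount tail head next hnext p b0 u = outdeg tail u := by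
    intro u
    obtain ⟨N, hN⟩ := hreach (succMap tail head p.2 u)
    exact hL2 u (hPall N _ hN (p.2.1 u) rfl)
  -- therefore b0 = m
  have hb0 : b0 = Fintype.card E := by
    have h1 := sum_exitCount tail head next hnext p b0
    have h2 := sum_outdeg (E := E) tail
    rw [← h1, ← h2]
    exact Finset.sum_congr rfl (fun v _ => hCall v)
  -- conclusions
  have h2' : ∀ v, rotAt tail head next hnext p b0 v = p.2.1 v := by
    intro v
    rw [rotAt_eq, hCall v]
    have h := iterate_outdeg tail next hnext hcyc (p.2.1 v)
    rwa [p.2.2] at h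
  refine ⟨?_, ?_, ?_⟩
  · have hfix : (rotorStep tail head next hnext)^[b0] p = p := by
      have h2 : ((rotorStep tail head next hnext)^[b0] p).2 = p.2 :=
        Subtype.ext (funext h2')
      exact Prod.ext hw h2
    rw [← hb0]
    exact hfix
  · rw [Fintype.bijective_iff_injective_and_card]
    constructor
    · intro k k' hkk
      have hk1 := k.isLt
      have hk2 := k'.isLt
      exact Fin.ext (hinjOn k.1 k'.1 (by omega) (by omega) hkk)
    · simp
  · intro v
    have key : (Finset.univ.filter (fun k : Fin (Fintype.card E) =>
        ((rotorStep tail head next hnext)^[k.1] p).1 = v)).card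
        = exitCount tail head next hnext p (Fintype.card E) v := by
      unfold exitCount chipAt
      rw [Finset.card_filter, Finset.card_filter]
      exact Fin.sum_univ_eq_sum_range
        (fun i => if ((rotorStep tail head next hnext)^[i] p).1 = v then 1 else 0) _
    rw [key, ← hb0]
    exact hCall v
end
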